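/- arXiv:1806.07857 — 5 statements merged into one kernel-verified Lean document; each statement's English description precedes it below -/
import Mathlib

section
/- For a finite-horizon MDP with all reward given at the final time step, suppose a second-order Markov reward redistribution produces a return-equivalent SDP. Then for a fixed policy π, the redistribution is optimal (i.e., the expected sum of future redistributed rewards κ(T−t−1, t) = 0 for all 0 ≤ t ≤ T−1) if and only if the expected redistributed reward satisfies E[R_{t+1} | s_{t−1}, a_{t−1}, s_t, a_t] = q~^π(s_t, a_t) − q~^π(s_{t−1}, a_{t−1}) for all t, where q~^π is the action-value function of the original delayed-reward MDP. -/
open Finset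

/-- Conditional expectation of `f` given the event `E` under the (finitely supported)
probability weights `μ`. -/
noncomputable def cexp {Ω : Type*} [Fintype Ω] (μ f : Ω → ℝ) (E : Ω → Prop)
    [DecidablePred E] : ℝ :=
  (∑ ω ∈ Finset.univ.filter E, μ ω * f ω) / (∑ ω ∈ Finset.univ.filter E, μ ω)

/-- The predecessor time index, with `pd 0 = 0` serving as the formal pair
`(s₋₁, a₋₁)`. -/
def pd {T : ℕ} (t : Fin (T + 1)) : Fin (T + 1) :=
  ⟨t.1 - 1, lt_of_le_of_lt (Nat.sub_le _ _) t.isLt⟩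

section AuxBasic
variable {Ω : Type*} [Fintype Ω]

lemma aux_cexp_congr (μ f g : Ω → ℝ) (E : Ω → Prop) [DecidablePred E]
    (h : ∀ ω, E ω → μ ω ≠ 0 → f ω = g ω) : cexp μ f E = cexp μ g E := by
  unfold cexp
  congr 1
  refine Finset.sum_congr rfl fun ω hω => ?_
  rcases eq_or_ne (μ ω) 0 with h0 | h0
  · simp [h0]
  · rw [h ω (by simpa using (Finset.mem_filter.mp hω).2) h0]

lemma aux_cexp_add (μ f g : Ω → ℝ) (E : Ω → Prop) [DecidablePred E] :
    cexp μ (fun ω => f ω + g ω) E = cexp μ f E + cexp μ g E := by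
  unfold cexp
  rw [← add_div]
  congr 1
  rw [← Finset.sum_add_distrib]
  exact Finset.sum_congr rfl fun ω _ => mul_add _ _ _

lemma aux_cexp_const (μ : Ω → ℝ) (c : ℝ) (E : Ω → Prop) [DecidablePred E]
    (hZ : (∑ ω ∈ univ.filter E, μ ω) ≠ 0) : cexp μ (fun _ => c) E = c := by
  unfold cexp
  rw [← Finset.sum_mul, mul_comm, mul_div_assoc, div_self hZ, mul_one]

lemma aux_mass_ne_zero (μ : Ω → ℝ) (hμ0 : ∀ ω, 0 ≤ μ ω)
    (P : Ω → Prop) [DecidablePred P] (ω0 : Ω) (h0 : P ω0) (hne : μ ω0 ≠ 0) :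
    (∑ ω ∈ univ.filter P, μ ω) ≠ 0 := by
  have h1 : μ ω0 ≤ ∑ ω ∈ univ.filter P, μ ω :=
    Finset.single_le_sum (fun ω _ => hμ0 ω)
      (Finset.mem_filter.mpr ⟨Finset.mem_univ _, h0⟩)
  have h2 : 0 < μ ω0 := lt_of_le_of_ne (hμ0 ω0) (Ne.symm hne)
  exact ne_of_gt (lt_of_lt_of_le h2 h1)

lemma aux_mass_mono (μ : Ω → ℝ) (hμ0 : ∀ ω, 0 ≤ μ ω)
    (P Q : Ω → Prop) [DecidablePred P] [DecidablePred Q] (himp : ∀ ω, P ω → Q ω)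
    (h : (∑ ω ∈ univ.filter P, μ ω) ≠ 0) : (∑ ω ∈ univ.filter Q, μ ω) ≠ 0 := by
  have hpos : 0 < ∑ ω ∈ univ.filter P, μ ω :=
    lt_of_le_of_ne (Finset.sum_nonneg fun ω _ => hμ0 ω) (Ne.symm h)
  refine ne_of_gt (lt_of_lt_of_le hpos (Finset.sum_le_sum_of_subset_of_nonneg ?_
    fun ω _ _ => hμ0 ω))
  intro ω hω
  simp only [mem_filter, mem_univ, true_and] at hω ⊢
  exact himp ω hω

lemma aux_filter_and_sum (μf : Ω → ℝ) (P Q : Ω → Prop)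
    [DecidablePred P] [DecidablePred Q] :
    ∑ ω ∈ univ.filter P, (if Q ω then μf ω else 0)
      = ∑ ω ∈ univ.filter (fun ω => Q ω ∧ P ω), μf ω := by
  rw [Finset.sum_filter, Finset.sum_filter]
  refine Finset.sum_congr rfl fun ω _ => ?_
  by_cases h1 : P ω <;> by_cases h2 : Q ω <;> simp [h1, h2]

end AuxBasic

lemma aux_telescope {T : ℕ} (t : Fin (T + 1)) (f : Fin (T + 1) → ℝ) :
    ∑ τ ∈ univ.filter (fun τ : Fin (T + 1) => (t : ℕ) < (τ : ℕ)), (f τ - f (pd τ))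
      = f (Fin.last T) - f t := by
  set Q : ℕ → ℝ := fun j => f ⟨min j T, by omega⟩ with hQ
  have key : ∑ τ ∈ univ.filter (fun τ : Fin (T + 1) => (t : ℕ) < (τ : ℕ)), (f τ - f (pd τ))
      = ∑ j ∈ Finset.Ico ((t : ℕ) + 1) (T + 1), (Q j - Q (j - 1)) := by
    refine Finset.sum_nbij' (fun τ => (τ : ℕ)) (fun j => (⟨min j T, by omega⟩ : Fin (T + 1)))
      ?_ ?_ ?_ ?_ ?_
    · intro τ hτ
      simp only [mem_filter, mem_univ, true_and] at hτ
      simp only [Finset.mem_Ico]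
      omega
    · intro j hj
      simp only [Finset.mem_Ico] at hj
      simp only [mem_filter, mem_univ, true_and]
      show (t : ℕ) < min j T
      omega
    · intro τ hτ
      simp only [mem_filter, mem_univ, true_and] at hτ
      apply Fin.ext
      show min (τ : ℕ) T = (τ : ℕ)
      omega
    · intro j hj
      simp only [Finset.mem_Ico] at hj
      show min j T = j
      omega
    · intro τ hτ
      simp only [mem_filter, mem_univ, true_and] at hτ
      have h1 : (⟨min (τ : ℕ) T, by omega⟩ : Fin (T + 1)) = τ := by
        apply Fin.ext; show min (τ : ℕ) T = (τ : ℕ); omega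
      have h2 : (⟨min ((τ : ℕ) - 1) T, by omega⟩ : Fin (T + 1)) = pd τ := by
        apply Fin.ext; show min ((τ : ℕ) - 1) T = (pd τ : ℕ); simp only [pd]; omega
      simp only [hQ, h1, h2]
  rw [key, Finset.sum_Ico_eq_sum_range]
  have hn : T + 1 - ((t : ℕ) + 1) = T - (t : ℕ) := by omega
  rw [hn]
  have hc : ∀ i ∈ Finset.range (T - (t : ℕ)),
      Q ((t : ℕ) + 1 + i) - Q ((t : ℕ) + 1 + i - 1)
        = Q ((t : ℕ) + (i + 1)) - Q ((t : ℕ) + i) := by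
    intro i _
    congr 2 <;> omega
  rw [Finset.sum_congr rfl hc, Finset.sum_range_sub (fun i => Q ((t : ℕ) + i))]
  have e1 : Q ((t : ℕ) + (T - (t : ℕ))) = f (Fin.last T) := by
    simp only [hQ]; congr 1; apply Fin.ext
    show min ((t : ℕ) + (T - (t : ℕ))) T = T
    omega
  have e2 : Q ((t : ℕ) + 0) = f t := by
    simp only [hQ]; congr 1; apply Fin.ext
    show min ((t : ℕ) + 0) T = (t : ℕ)
    omega
  rw [e1, e2]

lemma aux_sum_split {T : ℕ} (t : Fin (T + 1)) (F : Fin (T + 1) → ℝ) :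
    ∑ τ, F τ = (∑ τ ∈ univ.filter (fun τ : Fin (T + 1) => (τ : ℕ) < (t : ℕ)), F τ) + F t
      + ∑ τ ∈ univ.filter (fun τ : Fin (T + 1) => (t : ℕ) < (τ : ℕ)), F τ := by
  rw [← Finset.sum_filter_add_sum_filter_not univ (fun τ : Fin (T + 1) => (τ : ℕ) < (t : ℕ)) F]
  have he : univ.filter (fun τ : Fin (T + 1) => ¬ (τ : ℕ) < (t : ℕ))
      = insert t (univ.filter (fun τ : Fin (T + 1) => (t : ℕ) < (τ : ℕ))) := by
    ext τ
    simp only [mem_filter, mem_univ, true_and, Finset.mem_insert, Fin.ext_iff]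
    omega
  rw [he, Finset.sum_insert (by simp), add_assoc]

section AuxMarkov
variable {S A : Type*} [Fintype S] [Fintype A] [DecidableEq S] [DecidableEq A]
variable {T : ℕ} (μ : (Fin (T + 1) → S × A) → ℝ)
  (p0 : S × A → ℝ) (p : Fin T → S × A → S × A → ℝ)

/-- glue two trajectories at time `t`: past from the first, future from the second. -/
def glu (t : Fin (T + 1)) (ω ω' : Fin (T + 1) → S × A) : Fin (T + 1) → S × A :=
  fun τ => if τ ≤ t then ω τ else ω' τ

omit [Fintype S] [Fintype A] [DecidableEq S] [DecidableEq A] in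
lemma aux_glu_mul (hμ : ∀ ω, μ ω = p0 (ω 0) * ∏ s : Fin T, p s (ω s.castSucc) (ω s.succ))
    (t : Fin (T + 1)) (ω ω' : Fin (T + 1) → S × A) (hx : ω t = ω' t) :
    μ (glu t ω ω') * μ (glu t ω' ω) = μ ω * μ ω' := by
  have g0 : ∀ u v : Fin (T + 1) → S × A, glu t u v 0 = u 0 := by
    intro u v; simp [glu, Fin.zero_le]
  have point : ∀ s : Fin T,
      p s (glu t ω ω' s.castSucc) (glu t ω ω' s.succ) *
        p s (glu t ω' ω s.castSucc) (glu t ω' ω s.succ) =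
      p s (ω s.castSucc) (ω s.succ) * p s (ω' s.castSucc) (ω' s.succ) := by
    intro s
    by_cases hle : s.succ ≤ t
    · have hle' : s.castSucc ≤ t := le_trans (Fin.castSucc_lt_succ : s.castSucc < s.succ).le hle
      simp [glu, hle, hle']
    · by_cases hle' : s.castSucc ≤ t
      · have het : s.castSucc = t := by
          apply Fin.ext
          have h1 : (s.castSucc : ℕ) ≤ (t : ℕ) := hle'
          have h2 : ¬ ((s.succ : ℕ) ≤ (t : ℕ)) := fun hc => hle hc
          simp only [Fin.val_succ, Fin.coe_castSucc] at h1 h2 ⊢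
          omega
        have hωs : ω s.castSucc = ω' s.castSucc := by rw [het, hx]
        simp only [glu, if_pos hle', if_neg hle]
        rw [hωs, mul_comm]
      · simp only [glu, if_neg hle, if_neg hle']
        rw [mul_comm]
  have main : (∏ s : Fin T, p s (glu t ω ω' s.castSucc) (glu t ω ω' s.succ)) *
      (∏ s : Fin T, p s (glu t ω' ω s.castSucc) (glu t ω' ω s.succ)) =
      (∏ s : Fin T, p s (ω s.castSucc) (ω s.succ)) *
      (∏ s : Fin T, p s (ω' s.castSucc) (ω' s.succ)) := by
    rw [← Finset.prod_mul_distrib, ← Finset.prod_mul_distrib]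
    exact Finset.prod_congr rfl fun s _ => point s
  rw [hμ, hμ, hμ, hμ, g0, g0]
  calc (p0 (ω 0) * ∏ s : Fin T, p s (glu t ω ω' s.castSucc) (glu t ω ω' s.succ)) *
      (p0 (ω' 0) * ∏ s : Fin T, p s (glu t ω' ω s.castSucc) (glu t ω' ω s.succ))
      = (p0 (ω 0) * p0 (ω' 0)) *
        ((∏ s : Fin T, p s (glu t ω ω' s.castSucc) (glu t ω ω' s.succ)) *
         (∏ s : Fin T, p s (glu t ω' ω s.castSucc) (glu t ω' ω s.succ))) := by ring
    _ = (p0 (ω 0) * p0 (ω' 0)) *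
        ((∏ s : Fin T, p s (ω s.castSucc) (ω s.succ)) *
         (∏ s : Fin T, p s (ω' s.castSucc) (ω' s.succ))) := by rw [main]
    _ = _ := by ring

lemma aux_cond_indep
    (hμ : ∀ ω, μ ω = p0 (ω 0) * ∏ s : Fin T, p s (ω s.castSucc) (ω s.succ))
    (t : Fin (T + 1)) (x : S × A) (f g : (Fin (T + 1) → S × A) → ℝ)
    (hf : ∀ ω ω', (∀ τ, t ≤ τ → ω τ = ω' τ) → f ω = f ω')
    (hg : ∀ ω ω', (∀ τ, τ ≤ t → ω τ = ω' τ) → g ω = g ω') :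
    (∑ ω ∈ univ.filter (fun ω => ω t = x), μ ω * f ω * g ω) *
      (∑ ω ∈ univ.filter (fun ω => ω t = x), μ ω) =
    (∑ ω ∈ univ.filter (fun ω => ω t = x), μ ω * f ω) *
      (∑ ω ∈ univ.filter (fun ω => ω t = x), μ ω * g ω) := by
  rw [Finset.sum_mul_sum, Finset.sum_mul_sum]
  rw [← Finset.sum_product', ← Finset.sum_product']
  refine (Finset.sum_nbij' (fun q => (glu t q.2 q.1, glu t q.1 q.2))
    (fun q => (glu t q.2 q.1, glu t q.1 q.2)) ?_ ?_ ?_ ?_ ?_).symm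
  · intro a ha
    simp only [Finset.mem_product, mem_filter, mem_univ, true_and] at ha ⊢
    constructor <;> simp [glu, ha.1, ha.2]
  · intro a ha
    simp only [Finset.mem_product, mem_filter, mem_univ, true_and] at ha ⊢
    constructor <;> simp [glu, ha.1, ha.2]
  · intro a ha
    ext τ <;> · simp only [glu]; by_cases hτ : τ ≤ t <;> simp [hτ]
  · intro a ha
    ext τ <;> · simp only [glu]; by_cases hτ : τ ≤ t <;> simp [hτ]
  · intro a ha
    simp only [Finset.mem_product, mem_filter, mem_univ, true_and] at ha
    have hx : a.1 t = a.2 t := by rw [ha.1, ha.2]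
    have hμeq : μ (glu t a.2 a.1) * μ (glu t a.1 a.2) = μ a.2 * μ a.1 :=
      aux_glu_mul μ p0 p hμ t a.2 a.1 hx.symm
    have hfeq : f (glu t a.2 a.1) = f a.1 := by
      refine hf _ _ fun τ hτ => ?_
      simp only [glu]
      by_cases hτ' : τ ≤ t
      · have hee : τ = t := le_antisymm hτ' hτ
        rw [if_pos hτ', hee, hx]
      · rw [if_neg hτ']
    have hgeq : g (glu t a.2 a.1) = g a.2 := by
      refine hg _ _ fun τ hτ => ?_
      simp [glu, hτ]
    calc μ a.1 * f a.1 * (μ a.2 * g a.2)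
        = (μ a.2 * μ a.1) * f a.1 * g a.2 := by ring
      _ = (μ (glu t a.2 a.1) * μ (glu t a.1 a.2)) * f (glu t a.2 a.1) * g (glu t a.2 a.1) := by
        rw [hμeq, hfeq, hgeq]
      _ = μ (glu t a.2 a.1) * f (glu t a.2 a.1) * g (glu t a.2 a.1) * μ (glu t a.1 a.2) := by
        ring

lemma aux_cexp_future
    (hμ : ∀ ω, μ ω = p0 (ω 0) * ∏ s : Fin T, p s (ω s.castSucc) (ω s.succ))
    (hμ0 : ∀ ω, 0 ≤ μ ω) (s t : Fin (T + 1)) (hst : s ≤ t) (y x : S × A)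
    (f : (Fin (T + 1) → S × A) → ℝ)
    (hf : ∀ ω ω', (∀ τ, t ≤ τ → ω τ = ω' τ) → f ω = f ω')
    (hZ2 : (∑ ω ∈ univ.filter (fun ω => ω s = y ∧ ω t = x), μ ω) ≠ 0) :
    cexp μ f (fun ω => ω s = y ∧ ω t = x) = cexp μ f (fun ω => ω t = x) := by
  have key := aux_cond_indep μ p0 p hμ t x f (fun ω => if ω s = y then 1 else 0) hf
    (fun ω ω' hag => by simp [hag s hst])
  have e1 : ∑ ω ∈ univ.filter (fun ω => ω t = x), μ ω * f ω * (if ω s = y then 1 else 0)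
      = ∑ ω ∈ univ.filter (fun ω => ω s = y ∧ ω t = x), μ ω * f ω := by
    rw [← aux_filter_and_sum (fun ω => μ ω * f ω) (fun ω => ω t = x) (fun ω => ω s = y)]
    exact Finset.sum_congr rfl fun ω _ => by by_cases h2 : ω s = y <;> simp [h2]
  have e2 : ∑ ω ∈ univ.filter (fun ω => ω t = x), μ ω * (if ω s = y then 1 else 0)
      = ∑ ω ∈ univ.filter (fun ω => ω s = y ∧ ω t = x), μ ω := by
    rw [← aux_filter_and_sum (fun ω => μ ω) (fun ω => ω t = x) (fun ω => ω s = y)]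
    exact Finset.sum_congr rfl fun ω _ => by by_cases h2 : ω s = y <;> simp [h2]
  rw [e1, e2] at key
  have hZ2pos : 0 < ∑ ω ∈ univ.filter (fun ω => ω s = y ∧ ω t = x), μ ω :=
    lt_of_le_of_ne (Finset.sum_nonneg fun ω _ => hμ0 ω) (Ne.symm hZ2)
  have hsub : univ.filter (fun ω : Fin (T + 1) → S × A => ω s = y ∧ ω t = x)
      ⊆ univ.filter (fun ω => ω t = x) := by
    intro ω hω
    simp only [mem_filter, mem_univ, true_and] at hω ⊢
    exact hω.2
  have hZxpos : 0 < ∑ ω ∈ univ.filter (fun ω : Fin (T + 1) → S × A => ω t = x), μ ω :=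
    lt_of_lt_of_le hZ2pos (Finset.sum_le_sum_of_subset_of_nonneg hsub fun ω _ _ => hμ0 ω)
  unfold cexp
  rw [div_eq_div_iff hZ2 (ne_of_gt hZxpos)]
  linarith [key]

lemma aux_cexp_past
    (hμ : ∀ ω, μ ω = p0 (ω 0) * ∏ s : Fin T, p s (ω s.castSucc) (ω s.succ))
    (hμ0 : ∀ ω, 0 ≤ μ ω) (s t : Fin (T + 1)) (hst : s ≤ t) (y x : S × A)
    (g : (Fin (T + 1) → S × A) → ℝ)
    (hg : ∀ ω ω', (∀ τ, τ ≤ s → ω τ = ω' τ) → g ω = g ω')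
    (hZ2 : (∑ ω ∈ univ.filter (fun ω => ω s = y ∧ ω t = x), μ ω) ≠ 0) :
    cexp μ g (fun ω => ω s = y ∧ ω t = x) = cexp μ g (fun ω => ω s = y) := by
  have key := aux_cond_indep μ p0 p hμ s y (fun ω => if ω t = x then 1 else 0) g
    (fun ω ω' hag => by simp [hag t hst])
    (fun ω ω' hag => hg ω ω' hag)
  have e1 : ∑ ω ∈ univ.filter (fun ω => ω s = y),
        μ ω * (if ω t = x then 1 else 0) * g ω
      = ∑ ω ∈ univ.filter (fun ω => ω t = x ∧ ω s = y), μ ω * g ω := by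
    rw [← aux_filter_and_sum (fun ω => μ ω * g ω) (fun ω => ω s = y) (fun ω => ω t = x)]
    exact Finset.sum_congr rfl fun ω _ => by by_cases h2 : ω t = x <;> simp [h2]
  have e2 : ∑ ω ∈ univ.filter (fun ω => ω s = y), μ ω * (if ω t = x then 1 else 0)
      = ∑ ω ∈ univ.filter (fun ω => ω t = x ∧ ω s = y), μ ω := by
    rw [← aux_filter_and_sum (fun ω => μ ω) (fun ω => ω s = y) (fun ω => ω t = x)]
    exact Finset.sum_congr rfl fun ω _ => by by_cases h2 : ω t = x <;> simp [h2]
  rw [e1, e2] at key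
  have hfe : univ.filter (fun ω : Fin (T + 1) → S × A => ω t = x ∧ ω s = y)
      = univ.filter (fun ω => ω s = y ∧ ω t = x) :=
    Finset.filter_congr fun ω _ => by tauto
  rw [hfe] at key
  have hZ2pos : 0 < ∑ ω ∈ univ.filter (fun ω => ω s = y ∧ ω t = x), μ ω :=
    lt_of_le_of_ne (Finset.sum_nonneg fun ω _ => hμ0 ω) (Ne.symm hZ2)
  have hsub : univ.filter (fun ω : Fin (T + 1) → S × A => ω s = y ∧ ω t = x)
      ⊆ univ.filter (fun ω => ω s = y) := by
    intro ω hω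
    simp only [mem_filter, mem_univ, true_and] at hω ⊢
    exact hω.1
  have hZypos : 0 < ∑ ω ∈ univ.filter (fun ω : Fin (T + 1) → S × A => ω s = y), μ ω :=
    lt_of_lt_of_le hZ2pos (Finset.sum_le_sum_of_subset_of_nonneg hsub fun ω _ _ => hμ0 ω)
  unfold cexp
  rw [div_eq_div_iff hZ2 (ne_of_gt hZypos)]
  linarith [key]

end AuxMarkov
/-- For a finite-horizon MDP with all reward given at the final time
step, suppose a second-order Markov reward redistribution produces a return-equivalent
SDP.  Then, for a fixed policy `π` (encoded in the Markov trajectory distribution `μ`),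
the redistribution is optimal, i.e. `κ(T-t-1, t) = 0` for all `0 ≤ t ≤ T-1`, if and
only if `E[R_{t+1} | s_{t-1}, a_{t-1}, s_t, a_t] = q̃^π(s_t,a_t) - q̃^π(s_{t-1},a_{t-1})`
for all `t` (with the convention `q̃^π(s₋₁,a₋₁) = 0`). -/
theorem optimal_reward_redistribution_iff_qvalue_differences
    {S A : Type*} [Fintype S] [Fintype A] [DecidableEq S] [DecidableEq A]
    (T : ℕ)
    -- Markov trajectory distribution of state-action pairs under the fixed policy π
    (μ : (Fin (T + 1) → S × A) → ℝ)
    (p0 : S × A → ℝ) (p : Fin T → S × A → S × A → ℝ)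
    (hμ : ∀ ω, μ ω = p0 (ω 0) * ∏ t : Fin T, p t (ω t.castSucc) (ω t.succ))
    (hμ0 : ∀ ω, 0 ≤ μ ω) (hμ1 : ∑ ω, μ ω = 1)
    -- expected delayed reward at sequence end, given the last state-action pair
    (rT : S × A → ℝ)
    -- second-order Markov redistributed reward:
    -- `h t y x = E[R_{t+1} | (s_{t-1},a_{t-1}) = y, (s_t,a_t) = x]`
    (h : Fin (T + 1) → S × A → S × A → ℝ)
    (hfirst : ∀ y y' x, h 0 y x = h 0 y' x)  -- at t = 0 there is no real predecessor
    -- return-equivalence of the redistribution: along every possible trajectory the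
    -- expected redistributed rewards sum to the expected delayed return
    (hret : ∀ ω : Fin (T + 1) → S × A, μ ω ≠ 0 →
      (∑ t : Fin (T + 1), h t (ω (pd t)) (ω t)) = rT (ω (Fin.last T)))
    -- q̃^π : action-value function of the delayed-reward MDP
    (q : Fin (T + 1) → S × A → ℝ)
    (hq : ∀ t x, q t x = cexp μ (fun ω => rT (ω (Fin.last T))) (fun ω => ω t = x)) :
    -- (I)  κ(T-t-1, t) = 0 for all 0 ≤ t ≤ T-1, i.e. the redistribution is optimal
    ((∀ t : Fin (T + 1), (t : ℕ) ≤ T - 1 → ∀ x : S × A,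
        (∑ ω ∈ Finset.univ.filter (fun ω => ω t = x), μ ω) ≠ 0 →
        cexp μ
          (fun ω => ∑ τ ∈ Finset.univ.filter (fun τ : Fin (T + 1) => (t : ℕ) < (τ : ℕ)),
            h τ (ω (pd τ)) (ω τ))
          (fun ω => ω t = x) = 0)
      ↔
    -- (II)  E[R_{t+1} | s_{t-1},a_{t-1},s_t,a_t] = q̃^π(s_t,a_t) - q̃^π(s_{t-1},a_{t-1})
      (∀ (t : Fin (T + 1)) (y x : S × A),
        (∑ ω ∈ Finset.univ.filter (fun ω => ω (pd t) = y ∧ ω t = x), μ ω) ≠ 0 →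
        h t y x = q t x - (if (t : ℕ) = 0 then 0 else q (pd t) y))) := by
  have hq_last : ∀ ω0 : Fin (T + 1) → S × A, μ ω0 ≠ 0 →
      q (Fin.last T) (ω0 (Fin.last T)) = rT (ω0 (Fin.last T)) := by
    intro ω0 h0
    have hZ : (∑ ω ∈ univ.filter (fun ω => ω (Fin.last T) = ω0 (Fin.last T)), μ ω) ≠ 0 :=
      aux_mass_ne_zero μ hμ0 _ ω0 rfl h0
    rw [hq]
    unfold cexp
    have hnum : ∑ ω ∈ univ.filter (fun ω => ω (Fin.last T) = ω0 (Fin.last T)),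
        μ ω * rT (ω (Fin.last T))
        = (∑ ω ∈ univ.filter (fun ω => ω (Fin.last T) = ω0 (Fin.last T)), μ ω)
          * rT (ω0 (Fin.last T)) := by
      rw [Finset.sum_mul]
      refine Finset.sum_congr rfl fun ω hω => ?_
      have := (Finset.mem_filter.mp hω).2
      rw [this]
    rw [hnum, mul_comm, mul_div_assoc, div_self hZ, mul_one]
  constructor
  · -- (I) → (II)
    intro hI t y x hZ2
    by_cases ht0 : (t : ℕ) = 0
    · -- t = 0
      have hte : t = 0 := Fin.ext ht0
      subst hte
      have hpd0 : pd (0 : Fin (T + 1)) = 0 := rfl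
      rw [hpd0] at hZ2
      have hyx : y = x := by
        by_contra hne
        apply hZ2
        rw [Finset.filter_false_of_mem, Finset.sum_empty]
        intro ω _
        rintro ⟨h1, h2⟩
        exact hne (h1 ▸ h2 ▸ rfl)
      subst hyx
      have hfe : univ.filter (fun ω : Fin (T + 1) → S × A => ω 0 = y ∧ ω 0 = y)
          = univ.filter (fun ω => ω 0 = y) :=
        Finset.filter_congr fun ω _ => by tauto
      have hZx : (∑ ω ∈ univ.filter (fun ω : Fin (T + 1) → S × A => ω 0 = y), μ ω) ≠ 0 := by
        rw [← hfe]; exact hZ2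
      have hI0 := hI 0 (by simp) y hZx
      have hdec : cexp μ (fun ω => rT (ω (Fin.last T))) (fun ω => ω 0 = y)
          = cexp μ (fun ω => h 0 y y
              + ∑ τ ∈ univ.filter (fun τ : Fin (T + 1) => ((0 : Fin (T + 1)) : ℕ) < (τ : ℕ)),
                h τ (ω (pd τ)) (ω τ)) (fun ω => ω 0 = y) := by
        refine aux_cexp_congr μ _ _ _ fun ω hω hne => ?_
        rw [← hret ω hne, aux_sum_split 0 (fun τ => h τ (ω (pd τ)) (ω τ))]
        have hem : univ.filter
            (fun τ : Fin (T + 1) => (τ : ℕ) < ((0 : Fin (T + 1)) : ℕ)) = ∅ := by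
          ext τ; simp
        rw [hem, Finset.sum_empty, hpd0, hω]
        ring
      rw [aux_cexp_add, aux_cexp_const μ _ _ hZx, hI0, add_zero] at hdec
      rw [if_pos ht0, sub_zero, hq 0 y, hdec]
    · -- t ≥ 1
      have ht1 : 1 ≤ (t : ℕ) := by omega
      have hpdv : ((pd t : Fin (T + 1)) : ℕ) = (t : ℕ) - 1 := rfl
      have hpdle : pd t ≤ t := by
        rw [Fin.le_def, hpdv]; omega
      -- mass positivity
      have hZx : (∑ ω ∈ univ.filter (fun ω : Fin (T + 1) → S × A => ω t = x), μ ω) ≠ 0 :=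
        aux_mass_mono μ hμ0 _ _ (fun ω hω => hω.2) hZ2
      have hZy : (∑ ω ∈ univ.filter
          (fun ω : Fin (T + 1) → S × A => ω (pd t) = y), μ ω) ≠ 0 :=
        aux_mass_mono μ hμ0 _ _ (fun ω hω => hω.1) hZ2
      set Fp : (Fin (T + 1) → S × A) → ℝ :=
        fun ω => ∑ τ ∈ univ.filter (fun τ : Fin (T + 1) => (τ : ℕ) < (t : ℕ)),
          h τ (ω (pd τ)) (ω τ) with hFp
      set G : (Fin (T + 1) → S × A) → ℝ :=
        fun ω => ∑ τ ∈ univ.filter (fun τ : Fin (T + 1) => (t : ℕ) < (τ : ℕ)),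
          h τ (ω (pd τ)) (ω τ) with hG
      set Gy : (Fin (T + 1) → S × A) → ℝ :=
        fun ω => ∑ τ ∈ univ.filter (fun τ : Fin (T + 1) => ((pd t : Fin (T + 1)) : ℕ) < (τ : ℕ)),
          h τ (ω (pd τ)) (ω τ) with hGy
      -- Step A : q t x = cexp rT E2
      have stepA : cexp μ (fun ω => rT (ω (Fin.last T)))
          (fun ω => ω (pd t) = y ∧ ω t = x) = q t x := by
        rw [hq t x]
        exact aux_cexp_future μ p0 p hμ hμ0 (pd t) t hpdle y x _
          (fun ω ω' hag => by rw [hag (Fin.last T) (Fin.le_last t)]) hZ2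
      -- Step B : decomposition over E2
      have stepB : cexp μ (fun ω => rT (ω (Fin.last T)))
          (fun ω => ω (pd t) = y ∧ ω t = x)
          = cexp μ Fp (fun ω => ω (pd t) = y ∧ ω t = x) + h t y x
            + cexp μ G (fun ω => ω (pd t) = y ∧ ω t = x) := by
        have hcg : cexp μ (fun ω => rT (ω (Fin.last T)))
            (fun ω => ω (pd t) = y ∧ ω t = x)
            = cexp μ (fun ω => (Fp ω + h t y x) + G ω)
              (fun ω => ω (pd t) = y ∧ ω t = x) := by
          refine aux_cexp_congr μ _ _ _ fun ω hω hne => ?_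
          rw [← hret ω hne, aux_sum_split t (fun τ => h τ (ω (pd τ)) (ω τ))]
          rw [hω.1, hω.2]
        rw [hcg, aux_cexp_add, aux_cexp_add, aux_cexp_const μ _ _ hZ2]
      -- Step C : past restriction
      have stepC : cexp μ Fp (fun ω => ω (pd t) = y ∧ ω t = x)
          = cexp μ Fp (fun ω => ω (pd t) = y) := by
        refine aux_cexp_past μ p0 p hμ hμ0 (pd t) t hpdle y x Fp ?_ hZ2
        intro ω ω' hag
        refine Finset.sum_congr rfl fun τ hτ => ?_
        have hτlt : (τ : ℕ) < (t : ℕ) := by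
          simpa using (Finset.mem_filter.mp hτ).2
        have h1 : ω (pd τ) = ω' (pd τ) := by
          refine hag (pd τ) ?_
          rw [Fin.le_def, hpdv]
          show (τ : ℕ) - 1 ≤ (t : ℕ) - 1
          omega
        have h2 : ω τ = ω' τ := by
          refine hag τ ?_
          rw [Fin.le_def, hpdv]
          omega
        rw [h1, h2]
      -- Step D : cexp Fp E_y = q (pd t) y
      have stepD : cexp μ Fp (fun ω => ω (pd t) = y) = q (pd t) y := by
        have hsplit : ∀ ω : Fin (T + 1) → S × A, μ ω ≠ 0 →
            rT (ω (Fin.last T)) = Fp ω + Gy ω := by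
          intro ω hne
          rw [← hret ω hne, aux_sum_split (pd t) (fun τ => h τ (ω (pd τ)) (ω τ))]
          have hins : univ.filter (fun τ : Fin (T + 1) => (τ : ℕ) < (t : ℕ))
              = insert (pd t) (univ.filter
                  (fun τ : Fin (T + 1) => (τ : ℕ) < ((pd t : Fin (T + 1)) : ℕ))) := by
            ext τ
            simp only [mem_filter, mem_univ, true_and, Finset.mem_insert, Fin.ext_iff, hpdv]
            omega
          rw [hFp]
          simp only
          rw [hins, Finset.sum_insert (by simp)]
          ring
        have hcg : cexp μ (fun ω => rT (ω (Fin.last T))) (fun ω => ω (pd t) = y)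
            = cexp μ (fun ω => Fp ω + Gy ω) (fun ω => ω (pd t) = y) :=
          aux_cexp_congr μ _ _ _ fun ω _ hne => hsplit ω hne
        have hIy := hI (pd t) (by rw [hpdv]; omega) y hZy
        rw [hq (pd t) y, hcg, aux_cexp_add, hIy, add_zero]
      -- Step E : cexp G E2 = 0
      have stepE : cexp μ G (fun ω => ω (pd t) = y ∧ ω t = x) = 0 := by
        have hres : cexp μ G (fun ω => ω (pd t) = y ∧ ω t = x)
            = cexp μ G (fun ω => ω t = x) := by
          refine aux_cexp_future μ p0 p hμ hμ0 (pd t) t hpdle y x G ?_ hZ2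
          intro ω ω' hag
          refine Finset.sum_congr rfl fun τ hτ => ?_
          have hτgt : (t : ℕ) < (τ : ℕ) := by
            simpa using (Finset.mem_filter.mp hτ).2
          have h1 : ω (pd τ) = ω' (pd τ) := by
            refine hag (pd τ) ?_
            rw [Fin.le_def]
            show (t : ℕ) ≤ (τ : ℕ) - 1
            omega
          have h2 : ω τ = ω' τ := hag τ (by rw [Fin.le_def]; omega)
          rw [h1, h2]
        rw [hres]
        by_cases htT : (t : ℕ) = T
        · have hem : univ.filter (fun τ : Fin (T + 1) => (t : ℕ) < (τ : ℕ)) = ∅ := by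
            ext τ
            simp only [mem_filter, mem_univ, true_and, Finset.notMem_empty, iff_false]
            have := τ.isLt
            omega
          rw [hG]
          simp only [hem, Finset.sum_empty]
          simp [cexp]
        · exact hI t (by have := t.isLt; omega) x hZx
      rw [if_neg ht0]
      have := stepA
      rw [stepB, stepC, stepD, stepE] at this
      linarith
  · -- (II) → (I)
    intro hII t ht x hZx
    have hnum : ∑ ω ∈ univ.filter (fun ω : Fin (T + 1) → S × A => ω t = x),
        μ ω * (∑ τ ∈ univ.filter (fun τ : Fin (T + 1) => (t : ℕ) < (τ : ℕ)),
          h τ (ω (pd τ)) (ω τ)) = 0 := by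
      have hptw : ∀ ω ∈ univ.filter (fun ω : Fin (T + 1) → S × A => ω t = x),
          μ ω * (∑ τ ∈ univ.filter (fun τ : Fin (T + 1) => (t : ℕ) < (τ : ℕ)),
            h τ (ω (pd τ)) (ω τ))
          = μ ω * (rT (ω (Fin.last T)) - q t x) := by
        intro ω hω
        rcases eq_or_ne (μ ω) 0 with h0 | h0
        · rw [h0, zero_mul, zero_mul]
        · have hωt : ω t = x := by simpa using (Finset.mem_filter.mp hω).2
          congr 1
          have hsum : ∑ τ ∈ univ.filter (fun τ : Fin (T + 1) => (t : ℕ) < (τ : ℕ)),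
              h τ (ω (pd τ)) (ω τ)
              = ∑ τ ∈ univ.filter (fun τ : Fin (T + 1) => (t : ℕ) < (τ : ℕ)),
                ((fun τ' => q τ' (ω τ')) τ - (fun τ' => q τ' (ω τ')) (pd τ)) := by
            refine Finset.sum_congr rfl fun τ hτ => ?_
            have hτgt : (t : ℕ) < (τ : ℕ) := by
              simpa using (Finset.mem_filter.mp hτ).2
            have hτ0 : ¬ ((τ : ℕ) = 0) := by omega
            have hZτ : (∑ ω' ∈ univ.filter
                (fun ω' : Fin (T + 1) → S × A =>
                  ω' (pd τ) = ω (pd τ) ∧ ω' τ = ω τ), μ ω') ≠ 0 :=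
              aux_mass_ne_zero μ hμ0 _ ω ⟨rfl, rfl⟩ h0
            have := hII τ (ω (pd τ)) (ω τ) hZτ
            rw [if_neg hτ0] at this
            exact this
          rw [hsum, aux_telescope t (fun τ' => q τ' (ω τ')), hq_last ω h0, hωt]
      rw [Finset.sum_congr rfl hptw]
      have hrw : ∀ ω ∈ univ.filter (fun ω : Fin (T + 1) → S × A => ω t = x),
          μ ω * (rT (ω (Fin.last T)) - q t x)
          = μ ω * rT (ω (Fin.last T)) - μ ω * q t x := fun ω _ => mul_sub _ _ _
      rw [Finset.sum_congr rfl hrw, Finset.sum_sub_distrib]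
      have hrT : ∑ ω ∈ univ.filter (fun ω : Fin (T + 1) → S × A => ω t = x),
          μ ω * rT (ω (Fin.last T))
          = q t x * (∑ ω ∈ univ.filter (fun ω : Fin (T + 1) → S × A => ω t = x), μ ω) := by
        rw [hq t x]
        unfold cexp
        rw [div_mul_cancel₀ _ hZx]
      rw [hrT, ← Finset.sum_mul]
      ring
    unfold cexp
    rw [hnum, zero_div]
end

section
/- Under an optimal reward redistribution, the expected sum of delayed rewards vanishes for every interval: κ(m, t−1) = 0 for all 1 ≤ t ≤ T and 0 ≤ m ≤ T − t. In particular, E_π[R_{t+1+τ} | s_{t−1}, a_{t−1}] = 0 for all 0 ≤ τ ≤ T − t − 1. -/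
open Finset

section Aux

variable {X : Type*} [Fintype X] [DecidableEq X]

/-- Glue a front path (times `0..u'`) and a back path (times `u'+1..T`). -/
def glueE (T u' : ℕ) (hu : u' < T) :
    ((Fin (u' + 1) → X) × (Fin (T - u') → X)) ≃ (Fin (T + 1) → X) where
  toFun fg i := if h : i.1 < u' + 1 then fg.1 ⟨i.1, h⟩
    else fg.2 ⟨i.1 - (u' + 1), by have := i.isLt; omega⟩
  invFun ω := (fun j => ω ⟨j.1, by have := j.isLt; omega⟩,
               fun j => ω ⟨u' + 1 + j.1, by have := j.isLt; omega⟩)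
  left_inv := by
    rintro ⟨f, g⟩
    refine Prod.ext ?_ ?_
    · funext j
      simp only
      rw [dif_pos j.isLt]
    · funext j
      simp only
      rw [dif_neg (by omega)]
      exact congrArg g (Fin.ext (by simp))
  right_inv := by
    intro ω; funext i
    by_cases h : i.1 < u' + 1
    · simp only [dif_pos h]
    · simp only [dif_neg h]
      exact congrArg ω (Fin.ext (by simp; omega))

lemma glueE_apply (T u' : ℕ) (hu : u' < T) (f : Fin (u' + 1) → X)
    (g : Fin (T - u') → X) (i : Fin (T + 1)) :
    glueE T u' hu (f, g) i = if h : i.1 < u' + 1 then f ⟨i.1, h⟩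
      else g ⟨i.1 - (u' + 1), by have := i.isLt; omega⟩ := rfl

/-- The "front" weight of a path up to time `u'`. -/
def Ffr (T u' : ℕ) (p0 : X → ℝ) (p : Fin T → X → X → ℝ)
    (f : Fin (u' + 1) → X) : ℝ :=
  p0 (f ⟨0, Nat.succ_pos _⟩) *
    ∏ t ∈ univ.filter (fun t : Fin T => t.1 < u'),
      p t (f ⟨min t.1 u', Nat.lt_succ_of_le (min_le_right _ _)⟩)
          (f ⟨min (t.1 + 1) u', Nat.lt_succ_of_le (min_le_right _ _)⟩)

/-- The "back" weight of a path after time `u'`, started at `z`. -/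
def Bbk (T u' : ℕ) (hu : u' < T) (p : Fin T → X → X → ℝ) (z : X)
    (g : Fin (T - u') → X) : ℝ :=
  ∏ t ∈ univ.filter (fun t : Fin T => ¬ t.1 < u'),
    p t (if t.1 = u' then z else g ⟨t.1 - (u' + 1), by have := t.isLt; omega⟩)
        (g ⟨t.1 - u', by have := t.isLt; omega⟩)

lemma mu_glue (T u' : ℕ) (hu : u' < T) (p0 : X → ℝ) (p : Fin T → X → X → ℝ)
    (z : X) (f : Fin (u' + 1) → X) (g : Fin (T - u') → X)
    (hz : f ⟨u', Nat.lt_succ_self _⟩ = z) :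
    p0 (glueE T u' hu (f, g) 0) *
      ∏ t : Fin T, p t (glueE T u' hu (f, g) t.castSucc) (glueE T u' hu (f, g) t.succ)
    = Ffr T u' p0 p f * Bbk T u' hu p z g := by
  rw [← Finset.prod_filter_mul_prod_filter_not univ (fun t : Fin T => t.1 < u')]
  rw [Ffr, Bbk, ← mul_assoc]
  congr 1
  · congr 1
    · refine Finset.prod_congr rfl fun t ht => ?_
      have htu : t.1 < u' := (mem_filter.mp ht).2
      have hc : (t.castSucc : Fin (T + 1)).1 = t.1 := rfl
      have hs : (t.succ : Fin (T + 1)).1 = t.1 + 1 := rfl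
      congr 1
      · rw [glueE_apply, dif_pos (by omega : (t.castSucc : Fin (T + 1)).1 < u' + 1)]
        exact congrArg f (Fin.ext (by simp only [hc]; omega))
      · rw [glueE_apply, dif_pos (by omega : (t.succ : Fin (T + 1)).1 < u' + 1)]
        exact congrArg f (Fin.ext (by simp only [hs]; omega))
  · refine Finset.prod_congr rfl fun t ht => ?_
    have htu : ¬ t.1 < u' := (mem_filter.mp ht).2
    have hc : (t.castSucc : Fin (T + 1)).1 = t.1 := rfl
    have hs : (t.succ : Fin (T + 1)).1 = t.1 + 1 := rfl
    congr 1
    · by_cases he : t.1 = u'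
      · rw [if_pos he, glueE_apply, dif_pos (by omega : (t.castSucc : Fin (T + 1)).1 < u' + 1)]
        rw [← hz]
        exact congrArg f (Fin.ext (by simp only [hc]; omega))
      · rw [if_neg he, glueE_apply,
          dif_neg (by omega : ¬ (t.castSucc : Fin (T + 1)).1 < u' + 1)]
        exact congrArg g (Fin.ext (by simp only [hc]))
    · rw [glueE_apply, dif_neg (by omega : ¬ (t.succ : Fin (T + 1)).1 < u' + 1)]
      exact congrArg g (Fin.ext (by simp only [hs]; omega))

lemma key_sum (T u' s' : ℕ) (hu : u' < T) (hs : s' ≤ u')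
    (p0 : X → ℝ) (p : Fin T → X → X → ℝ)
    (φ : X → Prop) [DecidablePred φ] (ρ : X → ℝ) (z : X) :
    ∑ ω ∈ univ.filter (fun ω : Fin (T + 1) → X =>
        φ (ω ⟨s', by omega⟩) ∧ ω ⟨u', by omega⟩ = z),
      (p0 (ω 0) * ∏ t : Fin T, p t (ω t.castSucc) (ω t.succ)) * ρ (ω (Fin.last T))
    = (∑ f : Fin (u' + 1) → X,
         if φ (f ⟨s', by omega⟩) ∧ f ⟨u', Nat.lt_succ_self _⟩ = z
         then Ffr T u' p0 p f else 0)
      * (∑ g : Fin (T - u') → X, Bbk T u' hu p z g * ρ (g ⟨T - u' - 1, by omega⟩)) := by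
  rw [Finset.sum_filter, ← Equiv.sum_comp (glueE T u' hu)
    (fun ω : Fin (T + 1) → X => if φ (ω ⟨s', by omega⟩) ∧ ω ⟨u', by omega⟩ = z then
      (p0 (ω 0) * ∏ t : Fin T, p t (ω t.castSucc) (ω t.succ)) * ρ (ω (Fin.last T)) else 0),
    Fintype.sum_prod_type, Finset.sum_mul]
  refine Finset.sum_congr rfl fun f _ => ?_
  have hCs : ∀ g : Fin (T - u') → X,
      glueE T u' hu (f, g) ⟨s', by omega⟩ = f ⟨s', by omega⟩ := fun g => by
    rw [glueE_apply, dif_pos (by omega : s' < u' + 1)]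
  have hCu : ∀ g : Fin (T - u') → X,
      glueE T u' hu (f, g) ⟨u', by omega⟩ = f ⟨u', Nat.lt_succ_self _⟩ := fun g => by
    rw [glueE_apply, dif_pos (Nat.lt_succ_self u')]
  have hlast : ∀ g : Fin (T - u') → X,
      glueE T u' hu (f, g) (Fin.last T) = g ⟨T - u' - 1, by omega⟩ := fun g => by
    rw [glueE_apply, dif_neg (by simp [Fin.val_last]; omega)]
    exact congrArg g (Fin.ext (by simp [Fin.val_last]; omega))
  by_cases hcf : φ (f ⟨s', by omega⟩) ∧ f ⟨u', Nat.lt_succ_self _⟩ = z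
  · rw [if_pos hcf, Finset.mul_sum]
    refine Finset.sum_congr rfl fun g _ => ?_
    rw [if_pos ⟨by rw [hCs g]; exact hcf.1, by rw [hCu g]; exact hcf.2⟩]
    rw [mu_glue T u' hu p0 p z f g hcf.2, hlast g]
    ring
  · rw [if_neg hcf, zero_mul]
    refine Finset.sum_eq_zero fun g _ => ?_
    rw [if_neg]
    intro hC
    exact hcf ⟨by rw [← hCs g]; exact hC.1, by rw [← hCu g]; exact hC.2⟩

lemma split_sum {T : ℕ} (p0 : X → ℝ) (p : Fin T → X → X → ℝ)
    (μ : (Fin (T + 1) → X) → ℝ)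
    (hμ : ∀ ω, μ ω = p0 (ω 0) * ∏ t : Fin T, p t (ω t.castSucc) (ω t.succ))
    (r : X → ℝ) (s' u' : ℕ) (hs : s' ≤ u') (hu : u' ≤ T) (x z : X) :
    (∑ ω ∈ univ.filter (fun ω : Fin (T + 1) → X => ω ⟨u', by omega⟩ = z),
        μ ω * r (ω (Fin.last T))) *
    (∑ ω ∈ univ.filter (fun ω : Fin (T + 1) → X =>
        ω ⟨s', by omega⟩ = x ∧ ω ⟨u', by omega⟩ = z), μ ω)
    = (∑ ω ∈ univ.filter (fun ω : Fin (T + 1) → X =>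
        ω ⟨s', by omega⟩ = x ∧ ω ⟨u', by omega⟩ = z), μ ω * r (ω (Fin.last T))) *
    (∑ ω ∈ univ.filter (fun ω : Fin (T + 1) → X => ω ⟨u', by omega⟩ = z), μ ω) := by
  rcases eq_or_lt_of_le hu with hT | hT
  · -- u' = T : the last state is determined by the conditioning event
    subst hT
    have hr : ∀ ω ∈ univ.filter (fun ω : Fin (u' + 1) → X => ω ⟨u', by omega⟩ = z),
        μ ω * r (ω (Fin.last u')) = r z * μ ω := by
      intro ω hω
      have h2 : ω (Fin.last u') = z := (mem_filter.mp hω).2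
      rw [h2]; ring
    have hr2 : ∀ ω ∈ univ.filter (fun ω : Fin (u' + 1) → X =>
        ω ⟨s', by omega⟩ = x ∧ ω ⟨u', by omega⟩ = z),
        μ ω * r (ω (Fin.last u')) = r z * μ ω := by
      intro ω hω
      have h2 : ω (Fin.last u') = z := (mem_filter.mp hω).2.2
      rw [h2]; ring
    rw [Finset.sum_congr rfl hr, Finset.sum_congr rfl hr2, ← Finset.mul_sum, ← Finset.mul_sum]
    ring
  · -- u' < T : use the splitting of the path measure
    have convT : ∀ ρ : X → ℝ,
        ∑ ω ∈ univ.filter (fun ω : Fin (T + 1) → X => ω ⟨u', by omega⟩ = z),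
          μ ω * ρ (ω (Fin.last T))
        = (∑ f : Fin (u' + 1) → X,
             if f ⟨u', Nat.lt_succ_self _⟩ = z then Ffr T u' p0 p f else 0)
          * (∑ g : Fin (T - u') → X, Bbk T u' hT p z g * ρ (g ⟨T - u' - 1, by omega⟩)) := by
      intro ρ
      calc ∑ ω ∈ univ.filter (fun ω : Fin (T + 1) → X => ω ⟨u', by omega⟩ = z),
              μ ω * ρ (ω (Fin.last T))
          = ∑ ω ∈ univ.filter (fun ω : Fin (T + 1) → X =>
              (fun _ : X => True) (ω ⟨s', by omega⟩) ∧ ω ⟨u', by omega⟩ = z),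
              (p0 (ω 0) * ∏ t : Fin T, p t (ω t.castSucc) (ω t.succ)) * ρ (ω (Fin.last T)) := by
            refine Finset.sum_congr (by ext ω; simp) fun ω _ => by rw [hμ]
        _ = _ := by
            rw [key_sum T u' s' hT hs p0 p (fun _ : X => True) ρ z]
            congr 1
            exact Finset.sum_congr rfl fun fω _ => if_congr (by simp) rfl rfl
    have convX : ∀ ρ : X → ℝ,
        ∑ ω ∈ univ.filter (fun ω : Fin (T + 1) → X =>
            ω ⟨s', by omega⟩ = x ∧ ω ⟨u', by omega⟩ = z),
          μ ω * ρ (ω (Fin.last T))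
        = (∑ f : Fin (u' + 1) → X,
             if f ⟨s', by omega⟩ = x ∧ f ⟨u', Nat.lt_succ_self _⟩ = z
             then Ffr T u' p0 p f else 0)
          * (∑ g : Fin (T - u') → X, Bbk T u' hT p z g * ρ (g ⟨T - u' - 1, by omega⟩)) := by
      intro ρ
      calc ∑ ω ∈ univ.filter (fun ω : Fin (T + 1) → X =>
              ω ⟨s', by omega⟩ = x ∧ ω ⟨u', by omega⟩ = z),
              μ ω * ρ (ω (Fin.last T))
          = ∑ ω ∈ univ.filter (fun ω : Fin (T + 1) → X =>
              (fun v : X => v = x) (ω ⟨s', by omega⟩) ∧ ω ⟨u', by omega⟩ = z),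
              (p0 (ω 0) * ∏ t : Fin T, p t (ω t.castSucc) (ω t.succ)) * ρ (ω (Fin.last T)) := by
            refine Finset.sum_congr (by ext ω; simp) fun ω _ => by rw [hμ]
        _ = _ := by
            rw [key_sum T u' s' hT hs p0 p (fun v : X => v = x) ρ z]
    have hP : (∑ ω ∈ univ.filter (fun ω : Fin (T + 1) → X => ω ⟨u', by omega⟩ = z), μ ω)
        = ∑ ω ∈ univ.filter (fun ω : Fin (T + 1) → X => ω ⟨u', by omega⟩ = z),
            μ ω * (fun _ : X => (1 : ℝ)) (ω (Fin.last T)) := by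
      exact Finset.sum_congr rfl fun ω _ => by simp
    have hJ : (∑ ω ∈ univ.filter (fun ω : Fin (T + 1) → X =>
          ω ⟨s', by omega⟩ = x ∧ ω ⟨u', by omega⟩ = z), μ ω)
        = ∑ ω ∈ univ.filter (fun ω : Fin (T + 1) → X =>
            ω ⟨s', by omega⟩ = x ∧ ω ⟨u', by omega⟩ = z),
            μ ω * (fun _ : X => (1 : ℝ)) (ω (Fin.last T)) := by
      exact Finset.sum_congr rfl fun ω _ => by simp
    rw [hP, hJ, convT r, convX r, convT (fun _ : X => (1 : ℝ)), convX (fun _ : X => (1 : ℝ))]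
    ring

end Aux

/-- Under an optimal reward redistribution (expected redistributed
reward equal to the `q̃^π`-differences), the expected sum of delayed rewards vanishes
for every interval: `κ(m, t-1) = 0` for all `1 ≤ t ≤ T` and `0 ≤ m ≤ T - t`.  In
particular `E_π[R_{t+1+τ} | s_{t-1}, a_{t-1}] = 0` for all `0 ≤ τ ≤ T - t - 1`. -/
theorem optimal_redistribution_kappa_zero
    {S A : Type*} [Fintype S] [Fintype A] [DecidableEq S] [DecidableEq A]
    (T : ℕ)
    -- Markov trajectory distribution of state-action pairs under the fixed policy π
    (μ : (Fin (T + 1) → S × A) → ℝ)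
    (p0 : S × A → ℝ) (p : Fin T → S × A → S × A → ℝ)
    (hμ : ∀ ω, μ ω = p0 (ω 0) * ∏ t : Fin T, p t (ω t.castSucc) (ω t.succ))
    (hμ0 : ∀ ω, 0 ≤ μ ω) (hμ1 : ∑ ω, μ ω = 1)
    -- expected delayed reward at sequence end, given the last state-action pair
    (rT : S × A → ℝ)
    -- `h t y x = E[R_{t+1} | (s_{t-1},a_{t-1}) = y, (s_t,a_t) = x]`
    (h : Fin (T + 1) → S × A → S × A → ℝ)
    -- q̃^π : action-value function of the delayed-reward MDP
    (q : Fin (T + 1) → S × A → ℝ)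
    (hq : ∀ t x, q t x = cexp μ (fun ω => rT (ω (Fin.last T))) (fun ω => ω t = x))
    -- optimality, in the equivalent form:  E[R_{t+1} | s_{t-1},a_{t-1},s_t,a_t] is the
    -- difference of consecutive q̃^π-values (with q̃^π(s₋₁,a₋₁) = 0)
    (hopt : ∀ (t : Fin (T + 1)) (y x : S × A),
      (∑ ω ∈ Finset.univ.filter (fun ω => ω (pd t) = y ∧ ω t = x), μ ω) ≠ 0 →
      h t y x = q t x - (if (t : ℕ) = 0 then 0 else q (pd t) y)) :
    -- κ(m, t-1) = 0 for all 1 ≤ t ≤ T and 0 ≤ m ≤ T - t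
    (∀ t m : ℕ, ∀ (ht1 : 1 ≤ t) (ht2 : t ≤ T) (hm : m ≤ T - t), ∀ x : S × A,
      (∑ ω ∈ Finset.univ.filter (fun ω => ω ⟨t - 1, by omega⟩ = x), μ ω) ≠ 0 →
      cexp μ
        (fun ω => ∑ τ : Fin (m + 1),
          h ⟨t + τ.1, by have := τ.2; omega⟩
            (ω (pd ⟨t + τ.1, by have := τ.2; omega⟩))
            (ω ⟨t + τ.1, by have := τ.2; omega⟩))
        (fun ω => ω ⟨t - 1, by omega⟩ = x) = 0) ∧
    -- in particular, each expected future reward vanishes: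
    (∀ t τ : ℕ, ∀ (ht1 : 1 ≤ t) (ht2 : t ≤ T) (hτ : τ ≤ T - t), ∀ x : S × A,
      (∑ ω ∈ Finset.univ.filter (fun ω => ω ⟨t - 1, by omega⟩ = x), μ ω) ≠ 0 →
      cexp μ
        (fun ω => h ⟨t + τ, by omega⟩ (ω (pd ⟨t + τ, by omega⟩)) (ω ⟨t + τ, by omega⟩))
        (fun ω => ω ⟨t - 1, by omega⟩ = x) = 0) := by
  -- the tower/Markov property in the form we need
  have star : ∀ (s' u' : ℕ), ∀ hsu : s' ≤ u', ∀ hu : u' ≤ T, ∀ x : S × A,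
      (∑ ω ∈ univ.filter (fun ω : Fin (T + 1) → S × A => ω ⟨s', by omega⟩ = x),
        μ ω * q ⟨u', by omega⟩ (ω ⟨u', by omega⟩))
      = ∑ ω ∈ univ.filter (fun ω : Fin (T + 1) → S × A => ω ⟨s', by omega⟩ = x),
          μ ω * rT (ω (Fin.last T)) := by
    intro s' u' hsu hu x
    have qJK : ∀ z : S × A,
        q ⟨u', by omega⟩ z *
          (∑ ω ∈ univ.filter (fun ω : Fin (T + 1) → S × A =>
            ω ⟨s', by omega⟩ = x ∧ ω ⟨u', by omega⟩ = z), μ ω)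
        = ∑ ω ∈ univ.filter (fun ω : Fin (T + 1) → S × A =>
            ω ⟨s', by omega⟩ = x ∧ ω ⟨u', by omega⟩ = z), μ ω * rT (ω (Fin.last T)) := by
      intro z
      by_cases hP : (∑ ω ∈ univ.filter
          (fun ω : Fin (T + 1) → S × A => ω ⟨u', by omega⟩ = z), μ ω) = 0
      · have hz : ∀ ω ∈ univ.filter
            (fun ω : Fin (T + 1) → S × A => ω ⟨u', by omega⟩ = z), μ ω = 0 :=
          (Finset.sum_eq_zero_iff_of_nonneg (fun ω _ => hμ0 ω)).mp hP
        have hz' : ∀ ω : Fin (T + 1) → S × A, ω ⟨u', by omega⟩ = z → μ ω = 0 := fun ω hω =>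
          hz ω (mem_filter.mpr ⟨mem_univ _, hω⟩)
        rw [Finset.sum_eq_zero (fun ω hω => hz' ω (mem_filter.mp hω).2.2), mul_zero]
        exact (Finset.sum_eq_zero fun ω hω => by
          rw [hz' ω (mem_filter.mp hω).2.2, zero_mul]).symm
      · rw [hq]
        simp only [cexp]
        rw [div_mul_eq_mul_div, div_eq_iff hP]
        exact split_sum p0 p μ hμ rT s' u' hsu hu x z
    rw [← Finset.sum_fiberwise
        (univ.filter (fun ω : Fin (T + 1) → S × A => ω ⟨s', by omega⟩ = x))
        (fun ω => ω ⟨u', by omega⟩)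
        (fun ω => μ ω * q ⟨u', by omega⟩ (ω ⟨u', by omega⟩)),
      ← Finset.sum_fiberwise
        (univ.filter (fun ω : Fin (T + 1) → S × A => ω ⟨s', by omega⟩ = x))
        (fun ω => ω ⟨u', by omega⟩)
        (fun ω => μ ω * rT (ω (Fin.last T)))]
    refine Finset.sum_congr rfl fun z _ => ?_
    rw [Finset.filter_filter, ← qJK z, Finset.mul_sum]
    refine Finset.sum_congr rfl fun ω hω => ?_
    rw [(mem_filter.mp hω).2.2]
    ring
  -- single-reward expectations vanish (numerator form)
  have num0 : ∀ s' u' : ℕ, ∀ hsu : s' < u', ∀ hu : u' ≤ T, ∀ x : S × A,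
      (∑ ω ∈ univ.filter (fun ω : Fin (T + 1) → S × A => ω ⟨s', by omega⟩ = x),
        μ ω * h ⟨u', by omega⟩ (ω (pd ⟨u', by omega⟩)) (ω ⟨u', by omega⟩)) = 0 := by
    intro s' u' hsu hu x
    have step : ∀ ω : Fin (T + 1) → S × A,
        μ ω * h ⟨u', by omega⟩ (ω (pd ⟨u', by omega⟩)) (ω ⟨u', by omega⟩)
        = μ ω * q ⟨u', by omega⟩ (ω ⟨u', by omega⟩)
          - μ ω * q ⟨u' - 1, by omega⟩ (ω ⟨u' - 1, by omega⟩) := by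
      intro ω
      by_cases h0 : μ ω = 0
      · rw [h0]; ring
      · have hpos : 0 < μ ω := (hμ0 ω).lt_of_ne (Ne.symm h0)
        have hmem : ω ∈ univ.filter (fun ω' : Fin (T + 1) → S × A =>
            ω' (pd ⟨u', by omega⟩) = ω (pd ⟨u', by omega⟩) ∧
            ω' ⟨u', by omega⟩ = ω ⟨u', by omega⟩) :=
          mem_filter.mpr ⟨mem_univ _, rfl, rfl⟩
        have hne : (∑ ω' ∈ univ.filter (fun ω' : Fin (T + 1) → S × A =>
            ω' (pd ⟨u', by omega⟩) = ω (pd ⟨u', by omega⟩) ∧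
            ω' ⟨u', by omega⟩ = ω ⟨u', by omega⟩), μ ω') ≠ 0 :=
          ne_of_gt (lt_of_lt_of_le hpos
            (Finset.single_le_sum (fun i _ => hμ0 i) hmem))
        rw [hopt ⟨u', by omega⟩ _ _ hne]
        rw [if_neg (show ¬ u' = 0 by omega)]
        rw [show (pd (⟨u', by omega⟩ : Fin (T + 1)))
            = (⟨u' - 1, by omega⟩ : Fin (T + 1)) from rfl]
        ring
    rw [Finset.sum_congr rfl (fun ω _ => step ω), Finset.sum_sub_distrib,
      star s' u' (by omega) (by omega) x, star s' (u' - 1) (by omega) (by omega) x,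
      sub_self]
  have div0 : ∀ a b : ℝ, a = 0 → a / b = 0 := fun a b hab => by rw [hab, zero_div]
  constructor
  · intro t m ht1 ht2 hm x _
    simp only [cexp]
    refine div0 _ _ ?_
    simp_rw [Finset.mul_sum]
    rw [Finset.sum_comm]
    exact Finset.sum_eq_zero fun τ _ =>
      num0 (t - 1) (t + τ.1) (by omega) (by have := τ.isLt; omega) x
  · intro t τ ht1 ht2 hτ x _
    simp only [cexp]
    refine div0 _ _ ?_
    exact num0 (t - 1) (t + τ) (by omega) (by omega) x
end

section
/- For a Markov decision process with finite horizon and discount γ, the action-value function q^π and the variance V^π of the return satisfy the Bellman-type recursions: q^π(s,a) = r(s,a) + γ E_{s',a'}[q^π(s',a') | s,a] and V^π(s,a) = Var_r[r | s,a] + γ² (E_{s',a'}[V^π(s',a') | s,a] + Var_{s',a'}[q^π(s',a') | s,a]). -/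
open Finset

set_option linter.unusedSectionVars false
set_option maxHeartbeats 1000000


section Aux
variable {S A R : Type*} [Fintype S] [Fintype A] [Fintype R]
  [DecidableEq S] [DecidableEq A] [DecidableEq R]

/-- product of transition/policy and reward weights along a path, without start constraint -/
noncomputable def wfree (p : S × A → S × A → ℝ) (ν : S × A → R → ℝ) (m : ℕ)
    (β : Fin (m + 1) → (S × A) × R) : ℝ :=
  (∏ k : Fin m, p (β k.castSucc).1 (β k.succ).1) * ∏ k : Fin (m + 1), ν (β k).1 (β k).2

noncomputable def wgt (p : S × A → S × A → ℝ) (ν : S × A → R → ℝ) (m : ℕ) (x : S × A)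
    (β : Fin (m + 1) → (S × A) × R) : ℝ :=
  (if (β 0).1 = x then (1:ℝ) else 0) * wfree p ν m β

noncomputable def ret (γ : ℝ) (rv : R → ℝ) (m : ℕ) (β : Fin (m + 1) → (S × A) × R) : ℝ :=
  ∑ k : Fin (m + 1), γ ^ (k : ℕ) * rv (β k).2

lemma sum_pi_succ {Y : Type*} [Fintype Y] (m : ℕ) (f : (Fin (m + 1) → Y) → ℝ) :
    ∑ β, f β = ∑ y : Y, ∑ τ : Fin m → Y, f (Fin.cons y τ) := by
  rw [← (Fintype.sum_equiv (Fin.consEquiv fun _ => Y) _ (fun β => f β) (fun x => rfl)),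
    Fintype.sum_prod_type]
  rfl

lemma wfree_cons (p : S × A → S × A → ℝ) (ν : S × A → R → ℝ) (m : ℕ)
    (y : (S × A) × R) (β : Fin (m + 1) → (S × A) × R) :
    wfree p ν (m + 1) (Fin.cons y β) =
      ν y.1 y.2 * (p y.1 (β 0).1 * wfree p ν m β) := by
  unfold wfree
  rw [Fin.prod_univ_succ, Fin.prod_univ_succ]
  simp only [Fin.cons_zero, Fin.cons_succ, Fin.castSucc_zero]
  simp only [← Fin.succ_castSucc, Fin.cons_succ]
  ring

lemma wgt_cons (p : S × A → S × A → ℝ) (ν : S × A → R → ℝ) (m : ℕ) (x : S × A)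
    (y : (S × A) × R) (β : Fin (m + 1) → (S × A) × R) :
    wgt p ν (m + 1) x (Fin.cons y β) =
      (if y.1 = x then (1:ℝ) else 0) * ν y.1 y.2 *
        ∑ x' : S × A, p y.1 x' * wgt p ν m x' β := by
  unfold wgt
  rw [wfree_cons]
  have : ∑ x' : S × A, p y.1 x' * ((if (β 0).1 = x' then (1:ℝ) else 0) * wfree p ν m β)
      = p y.1 (β 0).1 * wfree p ν m β := by
    rw [Finset.sum_eq_single (β 0).1]
    · simp
    · intro b _ hb; simp [Ne.symm hb]
    · simp
  rw [this]
  simp [Fin.cons_zero]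


lemma ret_cons (γ : ℝ) (rv : R → ℝ) (m : ℕ) (y : (S × A) × R)
    (β : Fin (m + 1) → (S × A) × R) :
    ret γ rv (m + 1) (Fin.cons y β) = rv y.2 + γ * ret γ rv m β := by
  unfold ret
  rw [Fin.sum_univ_succ]
  simp only [Fin.cons_zero, Fin.cons_succ, pow_zero, one_mul, Fin.val_succ]
  have h : ∀ k : Fin (m+1), γ ^ (k.1+1) * rv (β k).2 = γ * (γ ^ k.1 * rv (β k).2) := by
    intro k; rw [pow_succ]; ring
  simp only [h, ← Finset.mul_sum]
  norm_num

variable (p : S × A → S × A → ℝ) (ν : S × A → R → ℝ)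

lemma sum_y (x : S × A) (c : S × A → R → ℝ) :
    ∑ y : (S × A) × R, (if y.1 = x then (1:ℝ) else 0) * ν y.1 y.2 * c y.1 y.2
      = ∑ j : R, ν x j * c x j := by
  rw [Fintype.sum_prod_type]
  have : ∀ s : S × A, ∑ j : R, (if s = x then (1:ℝ) else 0) * ν s j * c s j
      = if s = x then (∑ j : R, ν s j * c s j) else 0 := by
    intro s
    by_cases h : s = x <;> simp [h]
  simp only [this]
  simp

lemma wgt_sum_one (hp1 : ∀ x, ∑ y, p x y = 1) (hν1 : ∀ x, ∑ j, ν x j = 1) :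
    ∀ (m : ℕ) (x : S × A), ∑ β : Fin (m + 1) → (S × A) × R, wgt p ν m x β = 1 := by
  intro m
  induction m with
  | zero =>
    intro x
    rw [sum_pi_succ]
    have h1 : ∀ y : (S × A) × R, ∑ τ : Fin 0 → (S × A) × R,
        wgt p ν 0 x (Fin.cons y τ) = (if y.1 = x then (1:ℝ) else 0) * ν y.1 y.2 * 1 := by
      intro y
      haveI : Subsingleton (Fin 0 → (S × A) × R) := ⟨fun a b => funext fun i => i.elim0⟩
      rw [Fintype.sum_subsingleton _ (fun i => i.elim0)]
      unfold wgt wfree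
      simp
    simp only [h1]
    rw [sum_y ν x (fun _ _ => 1)]
    simp [hν1]
  | succ m ih =>
    intro x
    rw [sum_pi_succ]
    have h1 : ∀ y : (S × A) × R, ∑ τ : Fin (m + 1) → (S × A) × R,
        wgt p ν (m + 1) x (Fin.cons y τ)
        = (if y.1 = x then (1:ℝ) else 0) * ν y.1 y.2 * 1 := by
      intro y
      simp only [wgt_cons, ← Finset.mul_sum]
      congr 1
      rw [Finset.sum_comm]
      simp [← Finset.mul_sum, ih, hp1]
    simp only [h1]
    rw [sum_y ν x (fun _ _ => 1)]
    simp [hν1]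

lemma step (m : ℕ) (x : S × A) (f : (Fin (m + 2) → (S × A) × R) → ℝ) :
    ∑ β : Fin (m + 2) → (S × A) × R, wgt p ν (m + 1) x β * f β
      = ∑ y : (S × A) × R, (if y.1 = x then (1:ℝ) else 0) * ν y.1 y.2 *
          ∑ x' : S × A, p y.1 x' *
            ∑ τ : Fin (m + 1) → (S × A) × R, wgt p ν m x' τ * f (Fin.cons y τ) := by
  rw [sum_pi_succ]
  refine Finset.sum_congr rfl fun y _ => ?_
  simp only [wgt_cons]
  have h1 : ∀ τ : Fin (m + 1) → (S × A) × R,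
      ((if y.1 = x then (1:ℝ) else 0) * ν y.1 y.2 * ∑ x' : S × A, p y.1 x' * wgt p ν m x' τ)
        * f (Fin.cons y τ)
      = (if y.1 = x then (1:ℝ) else 0) * ν y.1 y.2 *
          ∑ x' : S × A, p y.1 x' * (wgt p ν m x' τ * f (Fin.cons y τ)) := by
    intro τ
    rw [mul_assoc, Finset.sum_mul]
    congr 1
    exact Finset.sum_congr rfl fun x' _ => by ring
  simp only [h1, ← Finset.mul_sum]
  congr 1
  rw [Finset.sum_comm]
  exact Finset.sum_congr rfl fun x' _ => (Finset.mul_sum _ _ _).symm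

noncomputable def Qm (γ : ℝ) (rv : R → ℝ) (p : S × A → S × A → ℝ) (ν : S × A → R → ℝ)
    (m : ℕ) (x : S × A) : ℝ :=
  ∑ β : Fin (m + 1) → (S × A) × R, wgt p ν m x β * ret γ rv m β

noncomputable def M2m (γ : ℝ) (rv : R → ℝ) (p : S × A → S × A → ℝ) (ν : S × A → R → ℝ)
    (m : ℕ) (x : S × A) : ℝ :=
  ∑ β : Fin (m + 1) → (S × A) × R, wgt p ν m x β * (ret γ rv m β) ^ 2

lemma marg (hp1 : ∀ x, ∑ y, p x y = 1) (hν1 : ∀ x, ∑ j, ν x j = 1)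
    (m : ℕ) (x : S × A) (h : S × A → ℝ) :
    ∑ β : Fin (m + 2) → (S × A) × R, wgt p ν (m + 1) x β * h ((β 1).1)
      = ∑ x' : S × A, p x x' * h x' := by
  rw [step p ν m x (fun β => h ((β 1).1))]
  have h2 : ∀ (y : (S × A) × R) (x' : S × A),
      ∑ τ : Fin (m + 1) → (S × A) × R, wgt p ν m x' τ * h (((Fin.cons y τ : Fin (m+2) → _) 1).1)
        = h x' := by
    intro y x'
    have e1 : ∀ τ : Fin (m + 1) → (S × A) × R,
        wgt p ν m x' τ * h (((Fin.cons y τ : Fin (m+2) → _) 1).1)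
          = wgt p ν m x' τ * h x' := by
      intro τ
      rw [show (1 : Fin (m+2)) = (0 : Fin (m+1)).succ from rfl, Fin.cons_succ]
      by_cases hτ : (τ 0).1 = x'
      · rw [hτ]
      · simp [wgt, hτ]
    simp only [e1]
    rw [← Finset.sum_mul, wgt_sum_one p ν hp1 hν1, one_mul]
  simp only [h2]
  rw [sum_y ν x (fun s _ => ∑ x' : S × A, p s x' * h x'), ← Finset.sum_mul, hν1, one_mul]

lemma QmR (hp1 : ∀ x, ∑ y, p x y = 1) (hν1 : ∀ x, ∑ j, ν x j = 1)
    (γ : ℝ) (rv : R → ℝ) (m : ℕ) (x : S × A) :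
    Qm γ rv p ν (m + 1) x
      = (∑ j, ν x j * rv j) + γ * ∑ x' : S × A, p x x' * Qm γ rv p ν m x' := by
  unfold Qm
  rw [step p ν m x (fun β => ret γ rv (m+1) β)]
  have h2 : ∀ (y : (S × A) × R) (x' : S × A),
      ∑ τ : Fin (m + 1) → (S × A) × R, wgt p ν m x' τ * ret γ rv (m+1) (Fin.cons y τ)
        = rv y.2 + γ * Qm γ rv p ν m x' := by
    intro y x'
    simp only [ret_cons]
    have e1 : ∀ τ : Fin (m + 1) → (S × A) × R,
        wgt p ν m x' τ * (rv y.2 + γ * ret γ rv m τ)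
          = wgt p ν m x' τ * rv y.2 + γ * (wgt p ν m x' τ * ret γ rv m τ) := by
      intro τ; ring
    simp only [e1]
    rw [Finset.sum_add_distrib, ← Finset.sum_mul, wgt_sum_one p ν hp1 hν1, ← Finset.mul_sum]
    simp [Qm]
  simp only [h2]
  have h3 : ∀ y : (S × A) × R,
      ∑ x' : S × A, p y.1 x' * (rv y.2 + γ * Qm γ rv p ν m x')
        = rv y.2 + γ * ∑ x' : S × A, p y.1 x' * Qm γ rv p ν m x' := by
    intro y
    have : ∀ x' : S × A, p y.1 x' * (rv y.2 + γ * Qm γ rv p ν m x')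
        = p y.1 x' * rv y.2 + γ * (p y.1 x' * Qm γ rv p ν m x') := fun x' => by ring
    simp only [this]
    rw [Finset.sum_add_distrib, ← Finset.sum_mul, hp1, ← Finset.mul_sum, one_mul]
  simp only [h3]
  rw [sum_y ν x (fun s j => rv j + γ * ∑ x' : S × A, p s x' * Qm γ rv p ν m x')]
  have : ∀ j : R, ν x j * (rv j + γ * ∑ x' : S × A, p x x' * Qm γ rv p ν m x')
      = ν x j * rv j + (ν x j) * (γ * ∑ x' : S × A, p x x' * Qm γ rv p ν m x') := fun j => by ring
  simp only [this]
  rw [Finset.sum_add_distrib, ← Finset.sum_mul, hν1, one_mul]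
  simp [Qm]

lemma M2mR (hp1 : ∀ x, ∑ y, p x y = 1) (hν1 : ∀ x, ∑ j, ν x j = 1)
    (γ : ℝ) (rv : R → ℝ) (m : ℕ) (x : S × A) :
    M2m γ rv p ν (m + 1) x
      = (∑ j, ν x j * (rv j) ^ 2)
        + 2 * γ * (∑ j, ν x j * rv j) * (∑ x' : S × A, p x x' * Qm γ rv p ν m x')
        + γ ^ 2 * ∑ x' : S × A, p x x' * M2m γ rv p ν m x' := by
  unfold M2m
  rw [step p ν m x (fun β => (ret γ rv (m+1) β) ^ 2)]
  have h2 : ∀ (y : (S × A) × R) (x' : S × A),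
      ∑ τ : Fin (m + 1) → (S × A) × R, wgt p ν m x' τ * (ret γ rv (m+1) (Fin.cons y τ)) ^ 2
        = (rv y.2) ^ 2 + 2 * γ * rv y.2 * Qm γ rv p ν m x' + γ ^ 2 * M2m γ rv p ν m x' := by
    intro y x'
    simp only [ret_cons]
    have e1 : ∀ τ : Fin (m + 1) → (S × A) × R,
        wgt p ν m x' τ * (rv y.2 + γ * ret γ rv m τ) ^ 2
          = wgt p ν m x' τ * (rv y.2) ^ 2
            + 2 * γ * rv y.2 * (wgt p ν m x' τ * ret γ rv m τ)
            + γ ^ 2 * (wgt p ν m x' τ * (ret γ rv m τ) ^ 2) := by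
      intro τ; ring
    simp only [e1]
    rw [Finset.sum_add_distrib, Finset.sum_add_distrib, ← Finset.sum_mul,
      wgt_sum_one p ν hp1 hν1, ← Finset.mul_sum, ← Finset.mul_sum]
    simp [Qm, M2m]
  simp only [h2]
  have h3 : ∀ y : (S × A) × R,
      ∑ x' : S × A, p y.1 x' *
          ((rv y.2) ^ 2 + 2 * γ * rv y.2 * Qm γ rv p ν m x' + γ ^ 2 * M2m γ rv p ν m x')
        = (rv y.2) ^ 2 + 2 * γ * rv y.2 * (∑ x' : S × A, p y.1 x' * Qm γ rv p ν m x')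
            + γ ^ 2 * ∑ x' : S × A, p y.1 x' * M2m γ rv p ν m x' := by
    intro y
    have : ∀ x' : S × A, p y.1 x' *
          ((rv y.2) ^ 2 + 2 * γ * rv y.2 * Qm γ rv p ν m x' + γ ^ 2 * M2m γ rv p ν m x')
        = p y.1 x' * (rv y.2) ^ 2 + 2 * γ * rv y.2 * (p y.1 x' * Qm γ rv p ν m x')
            + γ ^ 2 * (p y.1 x' * M2m γ rv p ν m x') := fun x' => by ring
    simp only [this]
    rw [Finset.sum_add_distrib, Finset.sum_add_distrib, ← Finset.sum_mul, hp1,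
      ← Finset.mul_sum, ← Finset.mul_sum, one_mul]
  simp only [h3]
  rw [sum_y ν x (fun s j => (rv j) ^ 2 + 2 * γ * rv j * (∑ x' : S × A, p s x' * Qm γ rv p ν m x')
      + γ ^ 2 * ∑ x' : S × A, p s x' * M2m γ rv p ν m x')]
  have : ∀ j : R, ν x j * ((rv j) ^ 2 + 2 * γ * rv j * (∑ x' : S × A, p x x' * Qm γ rv p ν m x')
      + γ ^ 2 * ∑ x' : S × A, p x x' * M2m γ rv p ν m x')
      = ν x j * (rv j) ^ 2
        + (ν x j * rv j) * (2 * γ * (∑ x' : S × A, p x x' * Qm γ rv p ν m x'))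
        + ν x j * (γ ^ 2 * ∑ x' : S × A, p x x' * M2m γ rv p ν m x') := fun j => by ring
  simp only [this]
  rw [Finset.sum_add_distrib, Finset.sum_add_distrib, ← Finset.sum_mul, ← Finset.sum_mul, hν1]
  simp only [M2m]
  ring

variable (p : S × A → S × A → ℝ) (ν : S × A → R → ℝ)

/-- Split a path of length `n+m+1` into first `n` steps and remaining `m+1`. -/
def splitEquiv (n m : ℕ) (Y : Type*) : ((Fin n → Y) × (Fin (m + 1) → Y)) ≃ (Fin (n + m + 1) → Y) where
  toFun := fun ab j => if h : j.1 < n then ab.1 ⟨j.1, h⟩ else ab.2 ⟨j.1 - n, by omega⟩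
  invFun := fun ω => (fun i => ω ⟨i.1, by omega⟩, fun k => ω ⟨n + k.1, by omega⟩)
  left_inv := by
    rintro ⟨α, β⟩
    refine Prod.ext (funext fun i => ?_) (funext fun k => ?_)
    · simp only [dif_pos i.2]
    · simp only [dif_neg (by omega : ¬ n + k.1 < n)]
      exact congrArg β (Fin.ext (by simp only [Fin.val_mk, Fin.coe_castSucc, Fin.val_succ, Fin.val_zero]; omega))
  right_inv := by
    intro ω
    funext j
    by_cases h : j.1 < n
    · simp only [dif_pos h]
    · simp only [dif_neg h]
      exact congrArg ω (Fin.ext (by simp only [Fin.val_mk, Fin.coe_castSucc, Fin.val_succ, Fin.val_zero]; omega))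

lemma sum_split (n m : ℕ) {Y : Type*} [Fintype Y] (F : (Fin (n + m + 1) → Y) → ℝ) :
    ∑ ω, F ω = ∑ α : Fin n → Y, ∑ β : Fin (m + 1) → Y, F (splitEquiv n m Y (α, β)) := by
  rw [← Fintype.sum_equiv (splitEquiv n m Y) (fun ab => F (splitEquiv n m Y ab)) F (fun ab => rfl),
    Fintype.sum_prod_type]

/-- extension of the state part of a prefix by a terminal state -/
def extf {n : ℕ} (α : Fin n → (S × A) × R) (s : S × A) : ℕ → S × A :=
  fun j => if h : j < n then (α ⟨j, h⟩).1 else s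

noncomputable def Cfun (p0 : S × A → ℝ) (p : S × A → S × A → ℝ) (ν : S × A → R → ℝ)
    (n : ℕ) (α : Fin n → (S × A) × R) (s : S × A) : ℝ :=
  p0 (extf α s 0) * (∏ k ∈ Finset.range n, p (extf α s k) (extf α s (k + 1))) *
    ∏ k : Fin n, ν (α k).1 (α k).2

lemma mu_fact (n m : ℕ)
    (p0 : S × A → ℝ) (p : S × A → S × A → ℝ) (ν : S × A → R → ℝ)
    (μ : (Fin (n + m + 1) → (S × A) × R) → ℝ)
    (hμ : ∀ ω, μ ω = p0 (ω 0).1 * (∏ t : Fin (n + m), p (ω t.castSucc).1 (ω t.succ).1) *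
        ∏ t : Fin (n + m + 1), ν (ω t).1 (ω t).2)
    (α : Fin n → (S × A) × R) (β : Fin (m + 1) → (S × A) × R) :
    μ (splitEquiv n m ((S × A) × R) (α, β))
      = Cfun p0 p ν n α ((β 0).1) * wfree p ν m β := by
  set s : S × A := (β 0).1 with hs
  set ω : Fin (n + m + 1) → (S × A) × R := splitEquiv n m ((S × A) × R) (α, β) with hω
  have hωval : ∀ (i : ℕ) (hi : i < n + m + 1),
      ω ⟨i, hi⟩ = if h : i < n then α ⟨i, h⟩ else β ⟨i - n, by omega⟩ := fun i hi => rfl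
  -- state function along the whole path
  set e2 : ℕ → S × A := fun i => if h : i < n then (α ⟨i, h⟩).1
    else if h2 : i - n < m + 1 then (β ⟨i - n, h2⟩).1 else s with he2
  have hωe2 : ∀ (i : ℕ) (hi : i < n + m + 1), (ω ⟨i, hi⟩).1 = e2 i := by
    intro i hi
    rw [hωval i hi]
    by_cases h : i < n
    · simp [he2, h]
    · simp [he2, h, (by omega : i - n < m + 1)]; intro h'; omega
  rw [hμ]
  have hp : (∏ t : Fin (n + m), p (ω t.castSucc).1 (ω t.succ).1)
      = (∏ k ∈ Finset.range n, p (extf α s k) (extf α s (k + 1)))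
        * ∏ k : Fin m, p (β k.castSucc).1 (β k.succ).1 := by
    have step1 : (∏ t : Fin (n + m), p (ω t.castSucc).1 (ω t.succ).1)
        = ∏ k ∈ Finset.range (n + m), p (e2 k) (e2 (k + 1)) := by
      rw [← Fin.prod_univ_eq_prod_range (fun k => p (e2 k) (e2 (k + 1))) (n + m)]
      refine Finset.prod_congr rfl fun t _ => ?_
      have h1 : (ω t.castSucc).1 = e2 t.1 := hωe2 t.1 (by omega)
      have h2 : (ω t.succ).1 = e2 (t.1 + 1) := hωe2 (t.1 + 1) (by omega)
      rw [← h1, ← h2]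
    rw [step1, Finset.prod_range_add]
    congr 1
    · refine Finset.prod_congr rfl fun k hk => ?_
      rw [Finset.mem_range] at hk
      have e21 : e2 k = extf α s k := by simp [he2, extf, hk]
      have e22 : e2 (k + 1) = extf α s (k + 1) := by
        by_cases h : k + 1 < n
        · simp [he2, extf, h]
        · have hkn : k + 1 = n := by omega
          simp only [he2, extf, dif_neg (by omega : ¬ k + 1 < n),
            dif_pos (by omega : k + 1 - n < m + 1)]
          have : (⟨k + 1 - n, by omega⟩ : Fin (m + 1)) = 0 := Fin.ext (by simp only [Fin.val_mk, Fin.coe_castSucc, Fin.val_succ, Fin.val_zero]; omega)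
          rw [this]
      rw [e21, e22]
    · rw [← Fin.prod_univ_eq_prod_range (fun k => p (e2 (n + k)) (e2 (n + k + 1))) m]
      refine Finset.prod_congr rfl fun k _ => ?_
      have e21 : e2 (n + k.1) = (β k.castSucc).1 := by
        simp only [he2, dif_neg (by omega : ¬ n + k.1 < n),
          dif_pos (by omega : n + k.1 - n < m + 1)]
        exact congrArg (fun b => ((β b).1 : S × A)) (Fin.ext (by simp only [Fin.val_mk, Fin.coe_castSucc, Fin.val_succ, Fin.val_zero]; omega))
      have e22 : e2 (n + k.1 + 1) = (β k.succ).1 := by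
        simp only [he2, dif_neg (by omega : ¬ n + k.1 + 1 < n),
          dif_pos (by omega : n + k.1 + 1 - n < m + 1)]
        exact congrArg (fun b => ((β b).1 : S × A)) (Fin.ext (by simp only [Fin.val_mk, Fin.coe_castSucc, Fin.val_succ, Fin.val_zero]; omega))
      rw [e21, e22]
  have hν : (∏ t : Fin (n + m + 1), ν (ω t).1 (ω t).2)
      = (∏ k : Fin n, ν (α k).1 (α k).2) * ∏ k : Fin (m + 1), ν (β k).1 (β k).2 := by
    set g : ℕ → ℝ := fun i => if h : i < n then ν (α ⟨i, h⟩).1 (α ⟨i, h⟩).2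
      else if h2 : i - n < m + 1 then ν (β ⟨i - n, h2⟩).1 (β ⟨i - n, h2⟩).2 else 1 with hg
    have step1 : (∏ t : Fin (n + m + 1), ν (ω t).1 (ω t).2)
        = ∏ k ∈ Finset.range (n + m + 1), g k := by
      rw [← Fin.prod_univ_eq_prod_range g (n + m + 1)]
      refine Finset.prod_congr rfl fun t _ => ?_
      have := hωval t.1 t.2
      have ht : ω t = ω ⟨t.1, t.2⟩ := rfl
      rw [ht, this]
      by_cases h : t.1 < n
      · simp [hg, h]
      · simp [hg, h, (by omega : t.1 - n < m + 1)]; intro h'; have := t.2; omega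
    have hrw : n + m + 1 = n + (m + 1) := by omega
    rw [step1, hrw, Finset.prod_range_add]
    congr 1
    · rw [← Fin.prod_univ_eq_prod_range g n]
      refine Finset.prod_congr rfl fun k _ => ?_
      simp [hg, k.2]
    · rw [← Fin.prod_univ_eq_prod_range (fun k => g (n + k)) (m + 1)]
      refine Finset.prod_congr rfl fun k _ => ?_
      simp only [hg, dif_neg (by omega : ¬ n + k.1 < n),
        dif_pos (by omega : n + k.1 - n < m + 1)]
      exact congrArg (fun b => ν (β b).1 (β b).2) (Fin.ext (by simp only [Fin.val_mk, Fin.coe_castSucc, Fin.val_succ, Fin.val_zero]; omega))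
  have h0 : (ω 0).1 = extf α s 0 := by
    have : (ω 0).1 = e2 0 := hωe2 0 (by omega)
    rw [this]
    by_cases h : 0 < n
    · simp [he2, extf, h]
    · have hn : n = 0 := by omega
      simp only [he2, extf, dif_neg h, dif_pos (by omega : 0 - n < m + 1)]
      exact congrArg (fun b => ((β b).1 : S × A)) (Fin.ext (by simp only [Fin.val_mk, Fin.coe_castSucc, Fin.val_succ, Fin.val_zero]; omega))
  rw [hp, hν, h0]
  unfold Cfun wfree
  ring

lemma split (T n m : ℕ) (hnm : T = n + m)
    (p0 : S × A → ℝ) (hp1 : ∀ x, ∑ y, p x y = 1) (hν1 : ∀ x, ∑ j, ν x j = 1)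
    (μ : (Fin (T + 1) → (S × A) × R) → ℝ)
    (hμ : ∀ ω, μ ω = p0 (ω 0).1 * (∏ t : Fin T, p (ω t.castSucc).1 (ω t.succ).1) *
        ∏ t : Fin (T + 1), ν (ω t).1 (ω t).2)
    (x : S × A) (h : (Fin (m + 1) → (S × A) × R) → ℝ) :
    ∑ ω ∈ Finset.univ.filter (fun ω => (ω ⟨n, by omega⟩).1 = x),
        μ ω * h (fun k => ω ⟨n + k.1, by omega⟩)
      = (∑ ω ∈ Finset.univ.filter (fun ω => (ω ⟨n, by omega⟩).1 = x), μ ω) *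
          ∑ β : Fin (m + 1) → (S × A) × R, wgt p ν m x β * h β := by
  subst hnm
  have key : ∀ (h : (Fin (m + 1) → (S × A) × R) → ℝ),
      (∑ ω ∈ Finset.univ.filter (fun ω => (ω ⟨n, by omega⟩).1 = x),
        μ ω * h (fun k => ω ⟨n + k.1, by omega⟩))
      = (∑ α : Fin n → (S × A) × R, Cfun p0 p ν n α x) *
          ∑ β : Fin (m + 1) → (S × A) × R, wgt p ν m x β * h β := by
    intro h
    rw [Finset.sum_filter, sum_split n m]
    have e1 : ∀ (α : Fin n → (S × A) × R) (β : Fin (m + 1) → (S × A) × R),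
        (if ((splitEquiv n m ((S × A) × R) (α, β)) ⟨n, by omega⟩).1 = x
          then μ (splitEquiv n m ((S × A) × R) (α, β)) *
            h (fun k => (splitEquiv n m ((S × A) × R) (α, β)) ⟨n + k.1, by omega⟩)
          else 0)
        = Cfun p0 p ν n α x * (wgt p ν m x β * h β) := by
      intro α β
      have hev : ((splitEquiv n m ((S × A) × R) (α, β)) ⟨n, by omega⟩) = β 0 := by
        show (if hh : n < n then α ⟨n, hh⟩ else β ⟨n - n, by omega⟩) = β 0
        rw [dif_neg (lt_irrefl n)]
        exact congrArg β (Fin.ext (by simp only [Fin.val_mk, Fin.val_zero]; omega))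
      have htail : (fun k : Fin (m + 1) =>
          (splitEquiv n m ((S × A) × R) (α, β)) ⟨n + k.1, by omega⟩) = β := by
        funext k
        show (if hh : n + k.1 < n then α ⟨n + k.1, hh⟩ else β ⟨n + k.1 - n, by omega⟩) = β k
        rw [dif_neg (by omega : ¬ n + k.1 < n)]
        exact congrArg β (Fin.ext (by simp only [Fin.val_mk]; omega))
      rw [hev, htail, mu_fact n m p0 p ν μ hμ α β]
      unfold wgt
      by_cases hb : (β 0).1 = x
      · rw [if_pos hb, if_pos hb, hb]; ring
      · rw [if_neg hb, if_neg hb]; ring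
    simp only [e1]
    simp only [← Finset.mul_sum]
    rw [← Finset.sum_mul]
  have hZ : (∑ ω ∈ Finset.univ.filter (fun ω => (ω ⟨n, by omega⟩).1 = x), μ ω)
      = ∑ α : Fin n → (S × A) × R, Cfun p0 p ν n α x := by
    have h1 := key (fun _ => 1)
    simp only [mul_one] at h1
    rw [h1, wgt_sum_one p ν hp1 hν1, mul_one]
  rw [key h, hZ]

end Aux

/-- For a finite-horizon MDP with discount `γ`, the action-value
function `q^π` and the variance `V^π` of the return satisfy the Bellman-type
recursions
`q^π(s,a) = r(s,a) + γ E_{s',a'}[q^π(s',a') | s,a]` and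
`V^π(s,a) = Var_r[r|s,a] + γ² (E_{s',a'}[V^π(s',a')|s,a] + Var_{s',a'}[q^π(s',a')|s,a])`.
Trajectories record the state-action pair and the sampled reward index at each step;
`μ` is the Markov trajectory distribution combining transitions, policy and reward
distribution. -/
theorem bellman_recursion_mean_and_variance
    {S A R : Type*} [Fintype S] [Fintype A] [Fintype R]
    [DecidableEq S] [DecidableEq A] [DecidableEq R]
    (T : ℕ) (γ : ℝ)
    (p0 : S × A → ℝ) (p : S × A → S × A → ℝ)     -- p(s'|s,a) π(a'|s')
    (ν : S × A → R → ℝ) (rv : R → ℝ)             -- reward distribution and values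
    (hp00 : ∀ x, 0 ≤ p0 x) (hp01 : ∑ x, p0 x = 1)
    (hp0 : ∀ x y, 0 ≤ p x y) (hp1 : ∀ x, ∑ y, p x y = 1)
    (hν0 : ∀ x j, 0 ≤ ν x j) (hν1 : ∀ x, ∑ j, ν x j = 1)
    (μ : (Fin (T + 1) → (S × A) × R) → ℝ)
    (hμ : ∀ ω, μ ω =
      p0 (ω 0).1 * (∏ t : Fin T, p (ω t.castSucc).1 (ω t.succ).1) *
        ∏ t : Fin (T + 1), ν (ω t).1 (ω t).2)
    -- the return G_t = ∑_{k=0}^{T-t} γ^k R_{t+k+1}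
    (G : Fin (T + 1) → (Fin (T + 1) → (S × A) × R) → ℝ)
    (hG : ∀ t ω, G t ω =
      ∑ k : Fin (T + 1 - t.1), γ ^ (k : ℕ) *
        rv (ω ⟨t.1 + k.1, by have := k.2; have := t.2; omega⟩).2)
    -- q^π, second moment M^π and variance V^π of the return
    (q M V : Fin (T + 1) → S × A → ℝ)
    (hq : ∀ t x, q t x = cexp μ (G t) (fun ω => (ω t).1 = x))
    (hM : ∀ t x, M t x = cexp μ (fun ω => (G t ω) ^ 2) (fun ω => (ω t).1 = x))
    (hV : ∀ t x, V t x = M t x - (q t x) ^ 2)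
    -- mean and variance of the immediate reward
    (rbar : S × A → ℝ) (hrbar : ∀ x, rbar x = ∑ j, ν x j * rv j)
    (varr : S × A → ℝ) (hvarr : ∀ x, varr x = ∑ j, ν x j * (rv j - rbar x) ^ 2) :
    ∀ (t : Fin (T + 1)) (ht : t.1 < T) (x : S × A),
      (∑ ω ∈ Finset.univ.filter (fun ω => (ω t).1 = x), μ ω) ≠ 0 →
      -- Bellman equation for the mean
      (q t x = rbar x + γ *
        cexp μ (fun ω => q ⟨t.1 + 1, by omega⟩ (ω ⟨t.1 + 1, by omega⟩).1)
          (fun ω => (ω t).1 = x)) ∧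
      -- Bellman-type equation for the variance
      (V t x = varr x + γ ^ 2 *
        (cexp μ (fun ω => V ⟨t.1 + 1, by omega⟩ (ω ⟨t.1 + 1, by omega⟩).1)
            (fun ω => (ω t).1 = x) +
         (cexp μ (fun ω => (q ⟨t.1 + 1, by omega⟩ (ω ⟨t.1 + 1, by omega⟩).1) ^ 2)
            (fun ω => (ω t).1 = x) -
          (cexp μ (fun ω => q ⟨t.1 + 1, by omega⟩ (ω ⟨t.1 + 1, by omega⟩).1)
            (fun ω => (ω t).1 = x)) ^ 2))) := by
  intro t ht x hZ
  -- nonnegativity of μ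
  have hμ0 : ∀ ω, 0 ≤ μ ω := by
    intro ω
    rw [hμ ω]
    refine mul_nonneg (mul_nonneg (hp00 _) (Finset.prod_nonneg fun k _ => hp0 _ _))
      (Finset.prod_nonneg fun k _ => hν0 _ _)
  -- the connection between conditional expectations and the chain measure
  have CONN : ∀ (u : Fin (T + 1)) (mu : ℕ), T = u.1 + mu → ∀ x'' : S × A,
      (∑ ω ∈ Finset.univ.filter (fun ω => (ω u).1 = x''), μ ω) ≠ 0 →
      q u x'' = Qm γ rv p ν mu x'' ∧ M u x'' = M2m γ rv p ν mu x'' := by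
    intro u mu hmu x'' hz
    have hGeq : ∀ ω, G u ω = ret γ rv mu (fun k => ω ⟨u.1 + k.1, by omega⟩) := by
      intro ω
      rw [hG]
      unfold ret
      refine Fintype.sum_equiv (finCongr (by omega : T + 1 - u.1 = mu + 1)) _ _ fun k => ?_
      rfl
    have h1 := split p ν T u.1 mu (by omega) p0 hp1 hν1 μ hμ x'' (ret γ rv mu)
    have h2 := split p ν T u.1 mu (by omega) p0 hp1 hν1 μ hμ x''
      (fun β => (ret γ rv mu β) ^ 2)
    have e1 : (∑ ω ∈ Finset.univ.filter (fun ω => (ω u).1 = x''), μ ω * G u ω)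
        = (∑ ω ∈ Finset.univ.filter (fun ω => (ω u).1 = x''), μ ω) * Qm γ rv p ν mu x'' := by
      calc (∑ ω ∈ Finset.univ.filter (fun ω => (ω u).1 = x''), μ ω * G u ω)
          = ∑ ω ∈ Finset.univ.filter (fun ω => (ω u).1 = x''),
              μ ω * ret γ rv mu (fun k => ω ⟨u.1 + k.1, by omega⟩) :=
            Finset.sum_congr rfl fun ω _ => by rw [hGeq]
        _ = _ := h1
    have e2 : (∑ ω ∈ Finset.univ.filter (fun ω => (ω u).1 = x''), μ ω * (G u ω) ^ 2)
        = (∑ ω ∈ Finset.univ.filter (fun ω => (ω u).1 = x''), μ ω) * M2m γ rv p ν mu x'' := by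
      calc (∑ ω ∈ Finset.univ.filter (fun ω => (ω u).1 = x''), μ ω * (G u ω) ^ 2)
          = ∑ ω ∈ Finset.univ.filter (fun ω => (ω u).1 = x''),
              μ ω * (ret γ rv mu (fun k => ω ⟨u.1 + k.1, by omega⟩)) ^ 2 :=
            Finset.sum_congr rfl fun ω _ => by rw [hGeq]
        _ = _ := h2
    constructor
    · rw [hq]
      unfold cexp
      rw [e1]
      exact mul_div_cancel_left₀ _ hz
    · rw [hM]
      unfold cexp
      rw [e2]
      exact mul_div_cancel_left₀ _ hz
  obtain ⟨m, hm⟩ : ∃ m, T = t.1 + (m + 1) := ⟨T - t.1 - 1, by omega⟩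
  -- next-step marginalization
  have hnextgen : ∀ Φ : S × A → ℝ,
      cexp μ (fun ω => Φ ((ω ⟨t.1 + 1, by omega⟩).1)) (fun ω => (ω t).1 = x)
        = ∑ x' : S × A, p x x' * Φ x' := by
    intro Φ
    have h3 := split p ν T t.1 (m + 1) (by omega) p0 hp1 hν1 μ hμ x
      (fun β => Φ ((β 1).1))
    have e3 : (∑ ω ∈ Finset.univ.filter (fun ω => (ω t).1 = x),
          μ ω * Φ ((ω ⟨t.1 + 1, by omega⟩).1))
        = (∑ ω ∈ Finset.univ.filter (fun ω => (ω t).1 = x), μ ω) *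
            ∑ β : Fin (m + 2) → (S × A) × R, wgt p ν (m + 1) x β * Φ ((β 1).1) := by
      calc (∑ ω ∈ Finset.univ.filter (fun ω => (ω t).1 = x),
            μ ω * Φ ((ω ⟨t.1 + 1, by omega⟩).1))
          = ∑ ω ∈ Finset.univ.filter (fun ω => (ω t).1 = x),
              μ ω * Φ ((((fun k : Fin (m + 2) => ω ⟨t.1 + k.1, by omega⟩) (1 : Fin (m + 2)))).1) := by
            refine Finset.sum_congr rfl fun ω _ => ?_
            have : ((fun k : Fin (m + 2) => ω ⟨t.1 + k.1, by omega⟩) (1 : Fin (m + 2)))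
                = ω ⟨t.1 + 1, by omega⟩ := by
              exact congrArg ω (Fin.ext (by simp only [Fin.val_mk, Fin.val_one]))
            rw [this]
        _ = _ := h3
    unfold cexp
    rw [e3, marg p ν hp1 hν1 m x Φ]
    exact mul_div_cancel_left₀ _ hZ
  -- positivity of the conditioning event at time t+1
  have hZpos : 0 < ∑ ω ∈ Finset.univ.filter (fun ω => (ω t).1 = x), μ ω :=
    lt_of_le_of_ne (Finset.sum_nonneg fun ω _ => hμ0 ω) (Ne.symm hZ)
  have hZnext : ∀ x' : S × A, p x x' ≠ 0 →
      (∑ ω ∈ Finset.univ.filter (fun ω => (ω ⟨t.1 + 1, by omega⟩).1 = x'), μ ω) ≠ 0 := by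
    intro x' hp'
    have hA := hnextgen (fun s => if s = x' then (1 : ℝ) else 0)
    unfold cexp at hA
    rw [div_eq_iff hZ] at hA
    have hA2 : (∑ ω ∈ Finset.univ.filter (fun ω => (ω t).1 = x),
        μ ω * (if (ω ⟨t.1 + 1, by omega⟩).1 = x' then (1 : ℝ) else 0))
        = (∑ ω ∈ Finset.univ.filter (fun ω => (ω t).1 = x), μ ω) * p x x' := by
      rw [hA]
      have : ∑ x'' : S × A, p x x'' * (if x'' = x' then (1:ℝ) else 0) = p x x' := by
        rw [Finset.sum_eq_single x']
        · simp
        · intro b _ hb; simp [hb]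
        · simp
      rw [this, mul_comm]
    have hle : (∑ ω ∈ Finset.univ.filter (fun ω => (ω t).1 = x), μ ω) * p x x'
        ≤ ∑ ω ∈ Finset.univ.filter (fun ω => (ω ⟨t.1 + 1, by omega⟩).1 = x'), μ ω := by
      rw [← hA2, Finset.sum_filter, Finset.sum_filter]
      refine Finset.sum_le_sum fun ω _ => ?_
      by_cases h1 : (ω t).1 = x <;> by_cases h2 : (ω ⟨t.1 + 1, by omega⟩).1 = x' <;>
        simp [h1, h2, hμ0 ω]
    have hppos : 0 < p x x' := lt_of_le_of_ne (hp0 x x') (Ne.symm hp')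
    exact (lt_of_lt_of_le (mul_pos hZpos hppos) hle).ne'
  -- replace next-step value functions by chain quantities
  have hqnext : ∀ x' : S × A, p x x' * q ⟨t.1 + 1, by omega⟩ x'
      = p x x' * Qm γ rv p ν m x' := by
    intro x'
    by_cases hp' : p x x' = 0
    · rw [hp']; ring
    · rw [(CONN ⟨t.1 + 1, by omega⟩ m (by simp only [Fin.val_mk]; omega) x' (hZnext x' hp')).1]
  have hMnext : ∀ x' : S × A, p x x' * M ⟨t.1 + 1, by omega⟩ x'
      = p x x' * M2m γ rv p ν m x' := by
    intro x'
    by_cases hp' : p x x' = 0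
    · rw [hp']; ring
    · rw [(CONN ⟨t.1 + 1, by omega⟩ m (by simp only [Fin.val_mk]; omega) x' (hZnext x' hp')).2]
  obtain ⟨hqt, hMt⟩ := CONN t (m + 1) (by omega) x hZ
  -- the three conditional expectations in the statement
  have hc1 : cexp μ (fun ω => q ⟨t.1 + 1, by omega⟩ (ω ⟨t.1 + 1, by omega⟩).1)
        (fun ω => (ω t).1 = x) = ∑ x' : S × A, p x x' * Qm γ rv p ν m x' := by
    rw [hnextgen (fun s => q ⟨t.1 + 1, by omega⟩ s)]
    exact Finset.sum_congr rfl fun x' _ => hqnext x'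
  have hc2 : cexp μ (fun ω => (q ⟨t.1 + 1, by omega⟩ (ω ⟨t.1 + 1, by omega⟩).1) ^ 2)
        (fun ω => (ω t).1 = x) = ∑ x' : S × A, p x x' * (Qm γ rv p ν m x') ^ 2 := by
    rw [hnextgen (fun s => (q ⟨t.1 + 1, by omega⟩ s) ^ 2)]
    refine Finset.sum_congr rfl fun x' _ => ?_
    by_cases hp' : p x x' = 0
    · rw [hp']; ring
    · rw [(CONN ⟨t.1 + 1, by omega⟩ m (by simp only [Fin.val_mk]; omega) x' (hZnext x' hp')).1]
  have hc3 : cexp μ (fun ω => V ⟨t.1 + 1, by omega⟩ (ω ⟨t.1 + 1, by omega⟩).1)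
        (fun ω => (ω t).1 = x)
        = (∑ x' : S × A, p x x' * M2m γ rv p ν m x')
          - ∑ x' : S × A, p x x' * (Qm γ rv p ν m x') ^ 2 := by
    rw [hnextgen (fun s => V ⟨t.1 + 1, by omega⟩ s)]
    rw [← Finset.sum_sub_distrib]
    refine Finset.sum_congr rfl fun x' _ => ?_
    rw [hV]
    by_cases hp' : p x x' = 0
    · rw [hp']; ring
    · rw [(CONN ⟨t.1 + 1, by omega⟩ m (by simp only [Fin.val_mk]; omega) x' (hZnext x' hp')).1,
        (CONN ⟨t.1 + 1, by omega⟩ m (by simp only [Fin.val_mk]; omega) x' (hZnext x' hp')).2]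
      ring
  have hvar2 : varr x = (∑ j, ν x j * (rv j) ^ 2) - (∑ j, ν x j * rv j) ^ 2 := by
    rw [hvarr]
    have : ∀ j : R, ν x j * (rv j - rbar x) ^ 2
        = ν x j * (rv j) ^ 2 - (ν x j * rv j) * (2 * rbar x) + ν x j * (rbar x) ^ 2 := by
      intro j; ring
    simp only [this]
    rw [Finset.sum_add_distrib, Finset.sum_sub_distrib, ← Finset.sum_mul, ← Finset.sum_mul,
      hν1, hrbar]
    ring
  constructor
  · rw [hqt, hc1, QmR p ν hp1 hν1 γ rv m x, hrbar]
  · rw [hV, hqt, hMt, hc1, hc2, hc3, M2mR p ν hp1 hν1 γ rv m x, QmR p ν hp1 hν1 γ rv m x,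
      hvar2]
    ring
end

section
/- In linear regression, the increase in the coefficient of determination when adding a new variable z to predictors x equals R²_{yw} − R²_{yx} = (r̂_{yz} − r_{yz})² / (1 − R²_{zx}), where r̂_{yz} = (β̂*_{zx})ᵀ r_{yx} is the predicted correlation of z with y based on the regression of z on x; moreover this increase equals the squared correlation r²_{ey} between the target y and the residual e = ẑ − z of predicting z from x. -/
open Matrix

/-- Sample mean. -/
noncomputable def smean {n : ℕ} (v : Fin n → ℝ) : ℝ := (∑ i, v i) / n

/-- Sample covariance. -/
noncomputable def scov {n : ℕ} (v w : Fin n → ℝ) : ℝ :=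
  (∑ i, (v i - smean v) * (w i - smean w)) / ((n : ℝ) - 1)

/-- Sample standard deviation. -/
noncomputable def sstd {n : ℕ} (v : Fin n → ℝ) : ℝ := Real.sqrt (scov v v)

/-- Sample correlation. -/
noncomputable def scorr {n : ℕ} (v w : Fin n → ℝ) : ℝ := scov v w / (sstd v * sstd w)

/-- Coefficient of determination `R² = 1 - mse / s_v²` of a fit. -/
noncomputable def rsq {n : ℕ} (v fit : Fin n → ℝ) : ℝ :=
  1 - ((∑ i, (fit i - v i) ^ 2) / ((n : ℝ) - 1)) / scov v v

lemma scov_comm {n : ℕ} (v w : Fin n → ℝ) : scov v w = scov w v := by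
  unfold scov; congr 1; exact Finset.sum_congr rfl fun i _ => by ring

lemma scov_sum_zero_left {n : ℕ} (u w : Fin n → ℝ) (h : ∑ i, u i = 0) :
    scov u w = (∑ i, u i * w i) / ((n : ℝ) - 1) := by
  have hm : smean u = 0 := by simp [smean, h]
  unfold scov
  rw [hm]
  congr 1
  have h2 : ∑ i, (u i - 0) * (w i - smean w)
      = (∑ i, u i * w i) - smean w * ∑ i, u i := by
    rw [Finset.mul_sum, ← Finset.sum_sub_distrib]
    exact Finset.sum_congr rfl fun i _ => by ring
  rw [h2, h]; ring

lemma smean_add {n : ℕ} (u v : Fin n → ℝ) :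
    smean (fun i => u i + v i) = smean u + smean v := by
  simp [smean, Finset.sum_add_distrib, add_div]

lemma scov_add_left {n : ℕ} (u v w : Fin n → ℝ) :
    scov (fun i => u i + v i) w = scov u w + scov v w := by
  unfold scov
  rw [smean_add, ← add_div]
  congr 1
  rw [← Finset.sum_add_distrib]
  exact Finset.sum_congr rfl fun i _ => by ring

lemma smean_affine {n k : ℕ} (hn : n ≠ 0) (a : ℝ) (c : Fin k → ℝ) (x : Fin n → Fin k → ℝ) :
    smean (fun i => a + ∑ l, c l * x i l) = a + ∑ l, c l * smean (x · l) := by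
  have hn' : (n : ℝ) ≠ 0 := Nat.cast_ne_zero.mpr hn
  unfold smean
  rw [Finset.sum_add_distrib, Finset.sum_const, Finset.sum_comm, add_div]
  congr 1
  · simp [hn', mul_comm, mul_div_assoc]
  · rw [Finset.sum_div]
    refine Finset.sum_congr rfl fun l _ => ?_
    rw [← Finset.mul_sum, mul_div_assoc]

lemma scov_affine_left {n k : ℕ} (hn : n ≠ 0) (a : ℝ) (c : Fin k → ℝ)
    (x : Fin n → Fin k → ℝ) (w : Fin n → ℝ) :
    scov (fun i => a + ∑ l, c l * x i l) w = ∑ l, c l * scov (x · l) w := by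
  unfold scov
  rw [smean_affine hn a c x]
  have key : ∑ i, ((a + ∑ l, c l * x i l) - (a + ∑ l, c l * smean (x · l))) * (w i - smean w)
      = ∑ l, c l * ∑ i, (x i l - smean (x · l)) * (w i - smean w) := by
    have h1 : ∀ i, ((a + ∑ l, c l * x i l) - (a + ∑ l, c l * smean (x · l))) * (w i - smean w)
        = ∑ l, c l * ((x i l - smean (x · l)) * (w i - smean w)) := by
      intro i
      rw [add_sub_add_left_eq_sub, ← Finset.sum_sub_distrib, Finset.sum_mul]
      exact Finset.sum_congr rfl fun l _ => by ring
    rw [Finset.sum_congr rfl fun i _ => h1 i, Finset.sum_comm]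
    exact Finset.sum_congr rfl fun l _ => (Finset.mul_sum _ _ _).symm
  rw [key, Finset.sum_div]
  exact Finset.sum_congr rfl fun l _ => (mul_div_assoc _ _ _)

lemma scov_self_nonneg {n : ℕ} (hn : 2 ≤ n) (v : Fin n → ℝ) : 0 ≤ scov v v := by
  have hN : (0:ℝ) < (n : ℝ) - 1 := by
    have : (2:ℝ) ≤ (n:ℝ) := by exact_mod_cast hn
    linarith
  unfold scov
  apply div_nonneg _ hN.le
  exact Finset.sum_nonneg fun i _ => mul_self_nonneg _

lemma sstd_sq {n : ℕ} (hn : 2 ≤ n) (v : Fin n → ℝ) : sstd v ^ 2 = scov v v :=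
  Real.sq_sqrt (scov_self_nonneg hn v)

lemma sum_mul_affine {n k : ℕ} (u v : Fin n → ℝ) (x : Fin n → Fin k → ℝ)
    (a : ℝ) (c : Fin k → ℝ) (hv : ∀ i, v i = a + ∑ l, c l * x i l)
    (h0 : ∑ i, u i = 0) (hx : ∀ l, ∑ i, u i * x i l = 0) :
    ∑ i, u i * v i = 0 := by
  have h : ∀ i, u i * v i = u i * a + ∑ l, c l * (u i * x i l) := by
    intro i
    rw [hv i, mul_add, Finset.mul_sum]
    congr 1
    exact Finset.sum_congr rfl fun l _ => by ring
  rw [Finset.sum_congr rfl fun i _ => h i, Finset.sum_add_distrib, ← Finset.sum_mul, h0,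
    Finset.sum_comm]
  simp only [← Finset.mul_sum, hx, mul_zero, Finset.sum_const_zero, zero_mul, add_zero]

/-- In linear regression, the increase in the coefficient of
determination when adding a new variable `z` to the predictors `x` equals
`R²_{yw} - R²_{yx} = (r̂_{yz} - r_{yz})² / (1 - R²_{zx})`, where
`r̂_{yz} = (β̂*_{zx})ᵀ r_{yx}` with `β̂*_{zx} = R_{xx}⁻¹ r_{zx}` the standardized
regression coefficients of `z` on `x`, and `R²_{zx} = r_{zx}ᵀ R_{xx}⁻¹ r_{zx}`;
moreover this increase equals the squared correlation `r²_{ey}` between `y` and the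
residual `e = ẑ - z` of predicting `z` from `x`.  The least-squares fits are
characterized by the normal equations. -/
theorem rsq_increase_by_new_variable
    (n k : ℕ) (hn : 2 ≤ n)
    (y z : Fin n → ℝ) (x : Fin n → Fin k → ℝ)
    -- least-squares fit of y on x
    (yx : Fin n → ℝ)
    (hyx : (∃ (b0 : ℝ) (b : Fin k → ℝ), ∀ i, yx i = b0 + ∑ j, b j * x i j) ∧
           (∑ i, (y i - yx i)) = 0 ∧ ∀ j, (∑ i, (y i - yx i) * x i j) = 0)
    -- least-squares fit of y on w = (x, z)
    (yw : Fin n → ℝ)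
    (hyw : (∃ (b0 : ℝ) (b : Fin k → ℝ) (bz : ℝ), ∀ i, yw i = b0 + (∑ j, b j * x i j) + bz * z i) ∧
           (∑ i, (y i - yw i)) = 0 ∧ (∀ j, (∑ i, (y i - yw i) * x i j) = 0) ∧
           (∑ i, (y i - yw i) * z i) = 0)
    -- least-squares fit ẑ of z on x
    (zx : Fin n → ℝ)
    (hzx : (∃ (b0 : ℝ) (b : Fin k → ℝ), ∀ i, zx i = b0 + ∑ j, b j * x i j) ∧
           (∑ i, (z i - zx i)) = 0 ∧ ∀ j, (∑ i, (z i - zx i) * x i j) = 0)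
    -- correlation matrix of predictors and correlation vectors
    (Rxx : Matrix (Fin k) (Fin k) ℝ)
    (hRxx : ∀ i j, Rxx i j = scorr (x · i) (x · j))
    (hRxxU : IsUnit Rxx.det)
    (ryx rzx : Fin k → ℝ)
    (hryx : ∀ j, ryx j = scorr y (x · j))
    (hrzx : ∀ j, rzx j = scorr z (x · j))
    -- nondegeneracy
    (hsy : scov y y ≠ 0) (hsz : scov z z ≠ 0)
    (hsx : ∀ j, scov (x · j) (x · j) ≠ 0)
    (hse : scov (fun i => zx i - z i) (fun i => zx i - z i) ≠ 0)
    (hR2zx : rzx ⬝ᵥ (Rxx⁻¹ *ᵥ rzx) ≠ 1) :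
    rsq y yw - rsq y yx
      = ((Rxx⁻¹ *ᵥ rzx) ⬝ᵥ ryx - scorr y z) ^ 2 / (1 - rzx ⬝ᵥ (Rxx⁻¹ *ᵥ rzx)) ∧
    rsq y yw - rsq y yx = (scorr (fun i => zx i - z i) y) ^ 2 := by
  classical
  obtain ⟨⟨ax, bx, hbx⟩, hr0, hrx⟩ := hyx
  obtain ⟨⟨aw, bw, bz, hbw⟩, hs0, hsxw, hszw⟩ := hyw
  obtain ⟨⟨az, cb, hcb⟩, hd0, hdx⟩ := hzx
  have hn0 : n ≠ 0 := by omega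
  have hN : (0:ℝ) < (n:ℝ) - 1 := by
    have h2 : (2:ℝ) ≤ (n:ℝ) := by exact_mod_cast hn
    linarith
  have hNne : ((n:ℝ) - 1) ≠ 0 := ne_of_gt hN
  set e : Fin n → ℝ := fun i => zx i - z i with he_def
  set r : Fin n → ℝ := fun i => y i - yx i with hr_def
  set s : Fin n → ℝ := fun i => y i - yw i with hs_def
  -- basic zero-sum facts
  have he0 : ∑ i, e i = 0 := by
    have h := hd0
    rw [Finset.sum_sub_distrib] at h
    have h2 : ∑ i, e i = (∑ i, zx i) - ∑ i, z i := by
      simp only [he_def]; rw [Finset.sum_sub_distrib]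
    rw [h2]; linarith
  have hex : ∀ l, ∑ i, e i * x i l = 0 := by
    intro l
    have h2 : ∑ i, (e i * x i l + (z i - zx i) * x i l) = 0 :=
      Finset.sum_eq_zero fun i _ => by simp only [he_def]; ring
    rw [Finset.sum_add_distrib, hdx l, add_zero] at h2
    exact h2
  have hrx' : ∀ l, ∑ i, r i * x i l = 0 := fun l => by
    simpa only [hr_def] using hrx l
  have hsx' : ∀ l, ∑ i, s i * x i l = 0 := fun l => by
    simpa only [hs_def] using hsxw l
  have hsz0 : ∑ i, s i * z i = 0 := by simpa only [hs_def] using hszw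
  -- orthogonality versus affine functions of x
  have horth : ∀ t : Fin n → ℝ, (∑ i, t i = 0) → (∀ l, ∑ i, t i * x i l = 0) →
      (∑ i, t i * yx i = 0) ∧ (∑ i, t i * zx i = 0) := fun t ht0 htx =>
    ⟨sum_mul_affine t yx x ax bx hbx ht0 htx, sum_mul_affine t zx x az cb hcb ht0 htx⟩
  obtain ⟨hryx0, hrzx0⟩ := horth r hr0 hrx'
  obtain ⟨hsyx0, hszx0⟩ := horth s hs0 hsx'
  obtain ⟨heyx0, hezx0⟩ := horth e he0 hex
  set A := ∑ i, e i * y i with hA_def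
  set B := ∑ i, e i * e i with hB_def
  have hscov_ee : scov e e = B / ((n:ℝ)-1) := by
    rw [hB_def]; exact scov_sum_zero_left e e he0
  have hBne : B ≠ 0 := by
    intro h
    exact hse (by rw [hscov_ee, h, zero_div])
  have hBpos : 0 < B := by
    refine lt_of_le_of_ne ?_ (Ne.symm hBne)
    rw [hB_def]
    exact Finset.sum_nonneg fun i _ => mul_self_nonneg _
  have hCpos : 0 < scov y y := lt_of_le_of_ne (scov_self_nonneg hn y) (Ne.symm hsy)
  have hCzpos : 0 < scov z z := lt_of_le_of_ne (scov_self_nonneg hn z) (Ne.symm hsz)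
  -- cross sums
  have hre : ∑ i, r i * e i = A := by
    have h1 : ∑ i, r i * e i = (∑ i, e i * y i) - ∑ i, e i * yx i := by
      rw [← Finset.sum_sub_distrib]
      exact Finset.sum_congr rfl fun i _ => by simp only [hr_def]; ring
    rw [h1, heyx0, hA_def, sub_zero]
  have hrz : ∑ i, r i * z i = -A := by
    have h1 : ∑ i, r i * z i = (∑ i, r i * zx i) - ∑ i, r i * e i := by
      rw [← Finset.sum_sub_distrib]
      exact Finset.sum_congr rfl fun i _ => by simp only [he_def]; ring
    rw [h1, hrzx0, hre]; ring
  have hez : ∑ i, e i * z i = -B := by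
    have h1 : ∑ i, e i * z i = (∑ i, e i * zx i) - ∑ i, e i * e i := by
      rw [← Finset.sum_sub_distrib]
      exact Finset.sum_congr rfl fun i _ => by simp only [he_def]; ring
    rw [h1, hezx0, ← hB_def]; ring
  have hse0 : ∑ i, s i * e i = 0 := by
    have h1 : ∑ i, s i * e i = (∑ i, s i * zx i) - ∑ i, s i * z i := by
      rw [← Finset.sum_sub_distrib]
      exact Finset.sum_congr rfl fun i _ => by simp only [he_def]; ring
    rw [h1, hszx0, hsz0, sub_zero]
  -- sums against yw
  have hyw_orth : ∀ t : Fin n → ℝ, (∑ i, t i = 0) → (∀ l, ∑ i, t i * x i l = 0) →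
      ∑ i, t i * yw i = bz * ∑ i, t i * z i := by
    intro t ht0 htx
    have h1 : ∑ i, t i * (aw + ∑ j, bw j * x i j) = 0 :=
      sum_mul_affine t _ x aw bw (fun i => rfl) ht0 htx
    calc ∑ i, t i * yw i
        = ∑ i, (t i * (aw + ∑ j, bw j * x i j) + bz * (t i * z i)) :=
          Finset.sum_congr rfl fun i _ => by rw [hbw i]; ring
      _ = (∑ i, t i * (aw + ∑ j, bw j * x i j)) + ∑ i, bz * (t i * z i) :=
          Finset.sum_add_distrib
      _ = bz * ∑ i, t i * z i := by rw [h1, ← Finset.mul_sum, zero_add]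
  have hsyw : ∑ i, s i * yw i = 0 := by rw [hyw_orth s hs0 hsx', hsz0, mul_zero]
  have hryw : ∑ i, r i * yw i = -(bz*A) := by rw [hyw_orth r hr0 hrx', hrz]; ring
  have heyw : ∑ i, e i * yw i = -(bz*B) := by rw [hyw_orth e he0 hex, hez]; ring
  set c := A / B with hc_def
  -- the key pointwise identity yw = yx + c • e
  have hu : ∀ i, yw i = yx i + c * e i := by
    have hexpand : ∀ i, (yw i - yx i - c * e i)^2 =
        r i * yw i - r i * yx i - c * (r i * e i) - c * (e i * yw i) + c * (e i * yx i)
        + c^2 * (e i * e i) - s i * yw i + s i * yx i + c * (s i * e i) := by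
      intro i; simp only [hr_def, hs_def]; ring
    have hsq : ∑ i, (yw i - yx i - c * e i)^2 = 0 := by
      rw [Finset.sum_congr rfl fun i _ => hexpand i]
      simp only [Finset.sum_add_distrib, Finset.sum_sub_distrib, ← Finset.mul_sum]
      rw [hryw, hryx0, hre, heyw, heyx0, hsyw, hsyx0, hse0, ← hB_def]
      simp only [hc_def]
      field_simp
      ring
    intro i
    have h0 : (yw i - yx i - c * e i)^2 = 0 :=
      (Finset.sum_eq_zero_iff_of_nonneg (fun j _ => sq_nonneg _)).mp hsq i (Finset.mem_univ i)
    have h1 : yw i - yx i - c * e i = 0 := by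
      exact pow_eq_zero_iff (two_ne_zero) |>.mp h0
    linarith
  -- the R² difference
  have hQw : ∑ i, (yw i - y i)^2 = (∑ i, (yx i - y i)^2) - 2*c*A + c^2*B := by
    have hexp : ∀ i, (yw i - y i)^2
        = (yx i - y i)^2 - 2*c*(r i * e i) + c^2*(e i * e i) := by
      intro i; rw [hu i]; simp only [hr_def]; ring
    rw [Finset.sum_congr rfl fun i _ => hexp i]
    simp only [Finset.sum_add_distrib, Finset.sum_sub_distrib, ← Finset.mul_sum]
    rw [hre, ← hB_def]
  have hdiff : rsq y yw - rsq y yx = A^2/(B*((n:ℝ)-1)*scov y y) := by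
    unfold rsq
    rw [hQw]
    simp only [hc_def]
    field_simp
    ring
  -- standard deviations
  have hsypos : 0 < sstd y := Real.sqrt_pos.mpr hCpos
  have hszpos : 0 < sstd z := Real.sqrt_pos.mpr hCzpos
  have hslpos : ∀ l, 0 < sstd (x · l) := fun l =>
    Real.sqrt_pos.mpr (lt_of_le_of_ne (scov_self_nonneg hn _) (Ne.symm (hsx l)))
  have hsz2 : sstd z ^ 2 = scov z z := sstd_sq hn z
  have hsy2 : sstd y ^ 2 = scov y y := sstd_sq hn y
  -- part 2
  have hscov_ey : scov e y = A/((n:ℝ)-1) := by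
    rw [hA_def]; exact scov_sum_zero_left e y he0
  have hpart2 : scorr e y ^ 2 = A^2/(B*((n:ℝ)-1)*scov y y) := by
    unfold scorr
    rw [div_pow, mul_pow, sstd_sq hn e, hsy2, hscov_ey, hscov_ee]
    field_simp
  -- part 1 : matrix computations
  have hzxf : zx = fun i => az + ∑ l, cb l * x i l := funext hcb
  have hscov_zx : ∀ w : Fin n → ℝ, scov zx w = ∑ l, cb l * scov (x · l) w := by
    intro w
    rw [hzxf]
    exact scov_affine_left hn0 az cb x w
  have hadd : ∀ w, scov zx w = scov z w + scov e w := by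
    intro w
    have hfe : (fun i => z i + e i) = zx := funext fun i => by simp only [he_def]; ring
    rw [← hfe, scov_add_left]
  have hscov_z_x : ∀ j, scov z (x · j) = scov zx (x · j) := by
    intro j
    have h1 : scov e (x · j) = 0 := by
      rw [scov_sum_zero_left e (x · j) he0]
      have h2 : ∑ i, e i * (x · j) i = 0 := hex j
      rw [h2, zero_div]
    rw [hadd (x · j), h1, add_zero]
  set bstar : Fin k → ℝ := fun l => cb l * sstd (x · l) / sstd z with hbstar_def
  have hmain : Rxx *ᵥ bstar = rzx := by
    funext j
    show ∑ l, Rxx j l * bstar l = rzx j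
    have hterm : ∀ l, Rxx j l * bstar l
        = cb l * scov (x · l) (x · j) / (sstd (x · j) * sstd z) := by
      intro l
      rw [hRxx j l]
      simp only [hbstar_def]
      unfold scorr
      rw [scov_comm (x · j) (x · l)]
      have h1 : sstd (x · l) ≠ 0 := (hslpos l).ne'
      have h2 : sstd (x · j) ≠ 0 := (hslpos j).ne'
      have h3 : sstd z ≠ 0 := hszpos.ne'
      field_simp
    calc ∑ l, Rxx j l * bstar l
        = ∑ l, cb l * scov (x · l) (x · j) / (sstd (x · j) * sstd z) :=
          Finset.sum_congr rfl fun l _ => hterm l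
      _ = (∑ l, cb l * scov (x · l) (x · j)) / (sstd (x · j) * sstd z) :=
          (Finset.sum_div _ _ _).symm
      _ = scov zx (x · j) / (sstd (x · j) * sstd z) := by rw [hscov_zx]
      _ = scov z (x · j) / (sstd (x · j) * sstd z) := by rw [hscov_z_x j]
      _ = rzx j := by rw [hrzx j]; unfold scorr; ring
  have hbeta : Rxx⁻¹ *ᵥ rzx = bstar := by
    rw [← hmain, Matrix.mulVec_mulVec, Matrix.nonsing_inv_mul Rxx hRxxU, Matrix.one_mulVec]
  have hdot1 : bstar ⬝ᵥ ryx = scov zx y / (sstd y * sstd z) := by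
    have hterm : ∀ l, bstar l * ryx l
        = cb l * scov (x · l) y / (sstd y * sstd z) := by
      intro l
      rw [hryx l]
      simp only [hbstar_def]
      unfold scorr
      rw [scov_comm y (x · l)]
      have h1 : sstd (x · l) ≠ 0 := (hslpos l).ne'
      have h2 : sstd y ≠ 0 := hsypos.ne'
      have h3 : sstd z ≠ 0 := hszpos.ne'
      field_simp
    calc bstar ⬝ᵥ ryx = ∑ l, bstar l * ryx l := rfl
      _ = ∑ l, cb l * scov (x · l) y / (sstd y * sstd z) :=
          Finset.sum_congr rfl fun l _ => hterm l
      _ = (∑ l, cb l * scov (x · l) y) / (sstd y * sstd z) := (Finset.sum_div _ _ _).symm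
      _ = scov zx y / (sstd y * sstd z) := by rw [hscov_zx]
  have hdot2 : rzx ⬝ᵥ bstar = scov zx z / (sstd z * sstd z) := by
    have hterm : ∀ l, rzx l * bstar l
        = cb l * scov (x · l) z / (sstd z * sstd z) := by
      intro l
      rw [hrzx l]
      simp only [hbstar_def]
      unfold scorr
      rw [scov_comm z (x · l)]
      have h1 : sstd (x · l) ≠ 0 := (hslpos l).ne'
      have h3 : sstd z ≠ 0 := hszpos.ne'
      field_simp
    calc rzx ⬝ᵥ bstar = ∑ l, rzx l * bstar l := rfl
      _ = ∑ l, cb l * scov (x · l) z / (sstd z * sstd z) :=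
          Finset.sum_congr rfl fun l _ => hterm l
      _ = (∑ l, cb l * scov (x · l) z) / (sstd z * sstd z) := (Finset.sum_div _ _ _).symm
      _ = scov zx z / (sstd z * sstd z) := by rw [hscov_zx]
  have hscov_ez : scov e z = -(B/((n:ℝ)-1)) := by
    rw [scov_sum_zero_left e z he0, hez, neg_div]
  have hnum : (Rxx⁻¹ *ᵥ rzx) ⬝ᵥ ryx - scorr y z = (A/((n:ℝ)-1))/(sstd y * sstd z) := by
    rw [hbeta, hdot1, hadd y]
    unfold scorr
    rw [hscov_ey, scov_comm z y]
    ring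
  have hden : 1 - rzx ⬝ᵥ (Rxx⁻¹ *ᵥ rzx) = (B/((n:ℝ)-1))/scov z z := by
    rw [hbeta, hdot2, hadd z, hscov_ez]
    have h1 : sstd z * sstd z = scov z z := by rw [← sq]; exact hsz2
    rw [h1]
    field_simp
    ring
  constructor
  · rw [hdiff, hnum, hden]
    rw [div_pow, mul_pow, hsy2, hsz2]
    field_simp
  · rw [hdiff, hpart2]
end

section
/- For a reward redistribution with terminal correction R_{T+2} = R~_{T+1} − Σ_{t=0}^T h_t appended after the episode, the optimality conditions extend to the correction: κ(T−t+1, t−1) = 0 for all t, and in particular E[R_{T+2} | s_T, a_T] = 0 when the contributions satisfy h_t = q~^π(s_t,a_t) − q~^π(s_{t−1},a_{t−1}). -/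
open Finset

/-- For a reward redistribution with the terminal correction
`R_{T+2} = R̃_{T+1} - ∑_{t=0}^T h_t` appended after the episode, the optimality
conditions extend to the correction: `κ(T-t+1, t-1) = 0` for all `t`, and in
particular `E[R_{T+2} | s_T, a_T] = 0`, when the contributions satisfy
`h_t = q̃^π(s_t,a_t) - q̃^π(s_{t-1},a_{t-1})` (with `q̃^π(s₋₁,a₋₁) = 0`).
The conditional expectation of the correction given a trajectory is
`rT(s_T,a_T) - ∑_t h_t`, where `rT(s_T,a_T) = E[R̃_{T+1} | s_T,a_T]`. -/
theorem optimality_conditions_with_correction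
    {S A : Type*} [Fintype S] [Fintype A] [DecidableEq S] [DecidableEq A]
    (T : ℕ)
    -- Markov trajectory distribution of state-action pairs under the fixed policy π
    (μ : (Fin (T + 1) → S × A) → ℝ)
    (p0 : S × A → ℝ) (p : Fin T → S × A → S × A → ℝ)
    (hμ : ∀ ω, μ ω = p0 (ω 0) * ∏ t : Fin T, p t (ω t.castSucc) (ω t.succ))
    (hμ0 : ∀ ω, 0 ≤ μ ω) (hμ1 : ∑ ω, μ ω = 1)
    -- expected delayed reward at sequence end, given the last state-action pair
    (rT : S × A → ℝ)
    -- `h t y x = E[R_{t+1} | (s_{t-1},a_{t-1}) = y, (s_t,a_t) = x]`, the contributions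
    (h : Fin (T + 1) → S × A → S × A → ℝ)
    -- q̃^π : action-value function of the delayed-reward MDP
    (q : Fin (T + 1) → S × A → ℝ)
    (hq : ∀ t x, q t x = cexp μ (fun ω => rT (ω (Fin.last T))) (fun ω => ω t = x))
    -- the contributions are the differences of consecutive q̃^π-values
    (hopt : ∀ (t : Fin (T + 1)) (y x : S × A),
      (∑ ω ∈ Finset.univ.filter (fun ω => ω (pd t) = y ∧ ω t = x), μ ω) ≠ 0 →
      h t y x = q t x - (if (t : ℕ) = 0 then 0 else q (pd t) y)) :
    -- κ(T-t+1, t-1) = 0 for all 1 ≤ t ≤ T+1 (rewards R_{t+1},…,R_{T+2})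
    (∀ t : ℕ, ∀ (ht1 : 1 ≤ t) (ht2 : t ≤ T + 1), ∀ x : S × A,
      (∑ ω ∈ Finset.univ.filter (fun ω => ω ⟨t - 1, by omega⟩ = x), μ ω) ≠ 0 →
      cexp μ
        (fun ω =>
          (∑ τ ∈ Finset.univ.filter (fun τ : Fin (T + 1) => t ≤ (τ : ℕ)),
            h τ (ω (pd τ)) (ω τ)) +
          (rT (ω (Fin.last T)) - ∑ τ : Fin (T + 1), h τ (ω (pd τ)) (ω τ)))
        (fun ω => ω ⟨t - 1, by omega⟩ = x) = 0) ∧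
    -- in particular:  E[R_{T+2} | s_T, a_T] = 0
    (∀ x : S × A,
      (∑ ω ∈ Finset.univ.filter (fun ω => ω (Fin.last T) = x), μ ω) ≠ 0 →
      cexp μ
        (fun ω => rT (ω (Fin.last T)) - ∑ τ : Fin (T + 1), h τ (ω (pd τ)) (ω τ))
        (fun ω => ω (Fin.last T) = x) = 0) := by

  have hμpos : ∀ ω, μ ω ≠ 0 → 0 < μ ω := fun ω hω => (hμ0 ω).lt_of_ne (Ne.symm hω)
  -- pair-support nonvanishing on the support of μ
  have hsupp : ∀ (τ : Fin (T + 1)) (ω : Fin (T + 1) → S × A), μ ω ≠ 0 →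
      (∑ ω' ∈ Finset.univ.filter (fun ω' => ω' (pd τ) = ω (pd τ) ∧ ω' τ = ω τ), μ ω') ≠ 0 := by
    intro τ ω hω
    have hmem : ω ∈ Finset.univ.filter
        (fun ω' => ω' (pd τ) = ω (pd τ) ∧ ω' τ = ω τ) := by simp
    have hle := Finset.single_le_sum (f := μ) (fun i _ => hμ0 i) hmem
    exact ne_of_gt (lt_of_lt_of_le (hμpos ω hω) hle)
  -- telescoping of contributions on the support of μ
  have tele : ∀ t : ℕ, 1 ≤ t → ∀ (ht2 : t ≤ T + 1), ∀ ω, μ ω ≠ 0 →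
      ∑ τ ∈ Finset.univ.filter (fun τ : Fin (T + 1) => (τ : ℕ) < t),
        h τ (ω (pd τ)) (ω τ) = q ⟨t - 1, by omega⟩ (ω ⟨t - 1, by omega⟩) := by
    intro t ht1
    induction t, ht1 using Nat.le_induction with
    | base =>
      intro ht2 ω hω
      have hfil : Finset.univ.filter (fun τ : Fin (T + 1) => (τ : ℕ) < 1)
          = {(0 : Fin (T + 1))} := by
        ext τ
        simp only [Finset.mem_filter, Finset.mem_univ, true_and, Finset.mem_singleton, Fin.ext_iff, Fin.val_zero]
        omega
      rw [hfil, Finset.sum_singleton]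
      have := hopt 0 (ω (pd 0)) (ω 0) (hsupp 0 ω hω)
      simpa using this
    | succ n hn ih =>
      intro ht2 ω hω
      have hτmem : (⟨n, by omega⟩ : Fin (T + 1)) ∉
          Finset.univ.filter (fun τ : Fin (T + 1) => (τ : ℕ) < n) := by simp
      have hfil : Finset.univ.filter (fun τ : Fin (T + 1) => (τ : ℕ) < n + 1)
          = insert (⟨n, by omega⟩ : Fin (T + 1))
              (Finset.univ.filter (fun τ : Fin (T + 1) => (τ : ℕ) < n)) := by
        ext τ
        simp [Fin.ext_iff]
        omega
      rw [hfil, Finset.sum_insert hτmem, ih (by omega) ω hω]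
      have hpd : pd (⟨n, by omega⟩ : Fin (T + 1)) = ⟨n - 1, by omega⟩ := rfl
      have hstep := hopt ⟨n, by omega⟩ (ω (pd ⟨n, by omega⟩)) (ω ⟨n, by omega⟩)
        (hsupp ⟨n, by omega⟩ ω hω)
      rw [if_neg (by omega : ¬ n = 0)] at hstep
      rw [hstep, hpd]
      have hfin : (⟨n + 1 - 1, by omega⟩ : Fin (T + 1)) = ⟨n, by omega⟩ := rfl
      rw [hfin]
      ring
  -- key computation
  have key : ∀ t : ℕ, 1 ≤ t → ∀ (ht2 : t ≤ T + 1), ∀ x : S × A,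
      (∑ ω ∈ Finset.univ.filter (fun ω => ω ⟨t - 1, by omega⟩ = x), μ ω) ≠ 0 →
      cexp μ
        (fun ω => rT (ω (Fin.last T)) -
          ∑ τ ∈ Finset.univ.filter (fun τ : Fin (T + 1) => (τ : ℕ) < t),
            h τ (ω (pd τ)) (ω τ))
        (fun ω => ω ⟨t - 1, by omega⟩ = x) = 0 := by
    intro t ht1 ht2 x hD
    have hnum : (∑ ω ∈ Finset.univ.filter (fun ω => ω ⟨t - 1, by omega⟩ = x),
        μ ω * (rT (ω (Fin.last T)) -
          ∑ τ ∈ Finset.univ.filter (fun τ : Fin (T + 1) => (τ : ℕ) < t),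
            h τ (ω (pd τ)) (ω τ)))
        = (∑ ω ∈ Finset.univ.filter (fun ω => ω ⟨t - 1, by omega⟩ = x),
            μ ω * (rT (ω (Fin.last T)) - q ⟨t - 1, by omega⟩ x)) := by
      apply Finset.sum_congr rfl
      intro ω hω
      by_cases hμω : μ ω = 0
      · simp [hμω]
      · have hev : ω ⟨t - 1, by omega⟩ = x := (Finset.mem_filter.mp hω).2
        rw [tele t ht1 ht2 ω hμω, hev]
    have hqx := hq ⟨t - 1, by omega⟩ x
    unfold cexp at hqx ⊢
    rw [hnum]
    have hN : (∑ ω ∈ Finset.univ.filter (fun ω => ω ⟨t - 1, by omega⟩ = x),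
        μ ω * rT (ω (Fin.last T)))
        = q ⟨t - 1, by omega⟩ x *
          (∑ ω ∈ Finset.univ.filter (fun ω => ω ⟨t - 1, by omega⟩ = x), μ ω) := by
      field_simp at hqx
      linarith [hqx]
    have : (∑ ω ∈ Finset.univ.filter (fun ω => ω ⟨t - 1, by omega⟩ = x),
        μ ω * (rT (ω (Fin.last T)) - q ⟨t - 1, by omega⟩ x)) = 0 := by
      simp only [mul_sub]
      rw [Finset.sum_sub_distrib, ← Finset.sum_mul, hN]
      ring
    rw [this, zero_div]
  constructor
  · intro t ht1 ht2 x hD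
    have hfun : (fun ω : Fin (T + 1) → S × A =>
        (∑ τ ∈ Finset.univ.filter (fun τ : Fin (T + 1) => t ≤ (τ : ℕ)),
          h τ (ω (pd τ)) (ω τ)) +
        (rT (ω (Fin.last T)) - ∑ τ : Fin (T + 1), h τ (ω (pd τ)) (ω τ)))
        = (fun ω => rT (ω (Fin.last T)) -
            ∑ τ ∈ Finset.univ.filter (fun τ : Fin (T + 1) => (τ : ℕ) < t),
              h τ (ω (pd τ)) (ω τ)) := by
      funext ω
      have hsplit := Finset.sum_filter_add_sum_filter_not Finset.univ
        (fun τ : Fin (T + 1) => t ≤ (τ : ℕ)) (fun τ => h τ (ω (pd τ)) (ω τ))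
      simp only [not_le] at hsplit
      linarith
    rw [hfun]
    exact key t ht1 ht2 x hD
  · intro x hD
    have hfil : Finset.univ.filter (fun τ : Fin (T + 1) => (τ : ℕ) < T + 1)
        = Finset.univ := Finset.filter_true_of_mem (fun τ _ => τ.isLt)
    have := key (T + 1) (by omega) (le_refl _) x hD
    rw [hfil] at this
    exact this
end
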